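/- arXiv:1807.03939 — 4 statements merged into one kernel-verified Lean document; each statement's English description precedes it below -/
import Mathlib

section
/- Let G be a connected r-regular graph (r ≥ 1) with vertex set {v_1,…,v_n}, and for each i = 1,…,n let H_i be an r_i-regular graph on t_i ≥ 1 vertices. Fix i and let δ be an eigenvalue of the normalized Laplacian 𝓛(H_i) that admits a (real) eigenvector orthogonal to the all-ones vector. Then (1 + r_i δ)/(r_i + 1) is an eigenvalue of the normalized Laplacian of the generalized subdivision-vertex corona S(G)⊙∧_{i=1}^n H_i. -/
open Matrix Polynomial

/-- Adjacency matrix over `ℝ` (with classical decidability). -/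
noncomputable def adjM {V : Type*} [Fintype V] [DecidableEq V] (G : SimpleGraph V) :
    Matrix V V ℝ :=
  letI : DecidableRel G.Adj := Classical.decRel _
  G.adjMatrix ℝ

/-- Degree of a vertex (with classical decidability). -/
noncomputable def cdeg {V : Type*} [Fintype V] (G : SimpleGraph V) (v : V) : ℕ :=
  letI : DecidableRel G.Adj := Classical.decRel _
  G.degree v

/-- The normalized Laplacian `𝓛(G) = I - D^{-1/2} A D^{-1/2}` of a finite graph. -/
noncomputable def normLap {V : Type*} [Fintype V] [DecidableEq V] (G : SimpleGraph V) :
    Matrix V V ℝ :=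
  1 - Matrix.diagonal (fun v => (Real.sqrt (cdeg G v))⁻¹) * adjM G
      * Matrix.diagonal (fun v => (Real.sqrt (cdeg G v))⁻¹)

/-- `x` is an eigenvalue of the real matrix `M`. -/
def IsEigenvalue {V : Type*} [Fintype V] (M : Matrix V V ℝ) (x : ℝ) : Prop :=
  ∃ v : V → ℝ, v ≠ 0 ∧ M.mulVec v = x • v

/-- The generalized subdivision-vertex corona `S(G) ⊙ ∧ᵢ Hᵢ`: take the subdivision `S(G)`
(vertices of `G` together with one inserted vertex per edge, each edge `uv` replaced by the
path `u–e–v`), add a disjoint copy of each `Hᵢ`, and join the `i`-th vertex of `G` to every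
vertex of `Hᵢ`. -/
def svc {n : ℕ} (G : SimpleGraph (Fin n)) (t : Fin n → ℕ)
    (H : ∀ i : Fin n, SimpleGraph (Fin (t i))) :
    SimpleGraph (Fin n ⊕ (G.edgeSet ⊕ Σ i : Fin n, Fin (t i))) :=
  SimpleGraph.fromRel (fun a b =>
    match a, b with
    | Sum.inl v, Sum.inr (Sum.inl e) => v ∈ (e : Sym2 (Fin n))
    | Sum.inl v, Sum.inr (Sum.inr ⟨i, _⟩) => v = i
    | Sum.inr (Sum.inr ⟨i, w⟩), Sum.inr (Sum.inr ⟨j, w'⟩) =>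
        ∃ h : i = j, (H j).Adj (h ▸ w) w'
    | _, _ => False)

section Aux

variable {n : ℕ} (G : SimpleGraph (Fin n)) (t : Fin n → ℕ)
  (H : ∀ i : Fin n, SimpleGraph (Fin (t i)))

lemma svc_adj_inl_sig (j i : Fin n) (w : Fin (t i)) :
    (svc G t H).Adj (Sum.inl j) (Sum.inr (Sum.inr ⟨i, w⟩)) ↔ j = i := by
  simp [svc, SimpleGraph.fromRel_adj]

lemma svc_not_adj_edge_sig (e : G.edgeSet) (i : Fin n) (w : Fin (t i)) :
    ¬ (svc G t H).Adj (Sum.inr (Sum.inl e)) (Sum.inr (Sum.inr ⟨i, w⟩)) := by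
  simp [svc, SimpleGraph.fromRel_adj]

lemma svc_adj_sig_sig (i i' : Fin n) (w : Fin (t i)) (w' : Fin (t i')) :
    (svc G t H).Adj (Sum.inr (Sum.inr ⟨i, w⟩)) (Sum.inr (Sum.inr ⟨i', w'⟩)) ↔
      ∃ h : i = i', (H i').Adj (h ▸ w) w' := by
  rw [svc, SimpleGraph.fromRel_adj]
  constructor
  · rintro ⟨hne, h | h⟩
    · exact h
    · obtain ⟨h, ha⟩ := h
      subst h
      exact ⟨rfl, ha.symm⟩
  · rintro ⟨h, ha⟩
    subst h
    refine ⟨?_, Or.inl ⟨rfl, ha⟩⟩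
    simp only [ne_eq, Sum.inr.injEq, Sigma.mk.inj_iff, heq_eq_eq, true_and]
    rintro ⟨rfl, rfl⟩ <;> exact ha.ne rfl

end Aux

theorem stmt2 {n r : ℕ} (hr : 1 ≤ r)
    (G : SimpleGraph (Fin n)) [DecidableRel G.Adj]
    (hconn : G.Connected) (hG : ∀ v, cdeg G v = r)
    (t : Fin n → ℕ) (ht : ∀ i, 1 ≤ t i)
    (rr : Fin n → ℕ) (H : ∀ i : Fin n, SimpleGraph (Fin (t i)))
    (hH : ∀ i w, cdeg (H i) w = rr i)
    (i₀ : Fin n) (δ : ℝ)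
    (hδ : ∃ v : Fin (t i₀) → ℝ, v ≠ 0 ∧ (normLap (H i₀)).mulVec v = δ • v ∧
      ∑ w, v w = 0) :
    IsEigenvalue (normLap (svc G t H)) ((1 + (rr i₀ : ℝ) * δ) / ((rr i₀ : ℝ) + 1)) := by
  classical
  obtain ⟨v, hv0, hvL, hvs⟩ := hδ
  set R : ℝ := (rr i₀ : ℝ) with hRdef
  have hR0 : (0:ℝ) ≤ R := Nat.cast_nonneg _
  have hR1 : R + 1 ≠ 0 := by positivity
  have hsq : Real.sqrt R * Real.sqrt R = R := Real.mul_self_sqrt hR0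
  -- Step 1 : normLap (H i₀) = 1 - R⁻¹ • adjM (H i₀)
  have hnl : normLap (H i₀) = 1 - R⁻¹ • adjM (H i₀) := by
    unfold normLap
    congr 1
    ext a b
    rw [Matrix.mul_diagonal, Matrix.diagonal_mul, hH, hH, Matrix.smul_apply]
    rw [show ((rr i₀ : ℕ) : ℝ) = R from rfl]
    rw [mul_comm, ← mul_assoc, ← mul_inv, hsq, smul_eq_mul]
  have hvL' : v - R⁻¹ • (adjM (H i₀)).mulVec v = δ • v := by
    rw [hnl, Matrix.sub_mulVec, Matrix.one_mulVec, Matrix.smul_mulVec] at hvL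
    exact hvL
  -- Step 2 : adjacency action
  have hA : (adjM (H i₀)).mulVec v = (R * (1 - δ)) • v := by
    rcases eq_or_ne R 0 with h0 | h0
    · have hAz : adjM (H i₀) = 0 := by
        ext a b
        simp only [adjM, SimpleGraph.adjMatrix_apply, Matrix.zero_apply, ite_eq_right_iff,
          one_ne_zero]
        intro hadj
        have hd := hH i₀ a
        have : 0 < cdeg (H i₀) a := by
          unfold cdeg
          exact (SimpleGraph.degree_pos_iff_exists_adj _ _).2 ⟨b, hadj⟩
        rw [hd] at this
        rw [hRdef, Nat.cast_eq_zero] at h0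
        omega
      rw [hAz, h0]
      simp [Matrix.mulVec]
    · have h1 : R⁻¹ • (adjM (H i₀)).mulVec v = (1 - δ) • v := by
        have := hvL'
        have h2 : R⁻¹ • (adjM (H i₀)).mulVec v = v - δ • v := by
          rw [← this]; ring_nf
        rw [h2, sub_smul, one_smul]
      calc (adjM (H i₀)).mulVec v = R • (R⁻¹ • (adjM (H i₀)).mulVec v) := by
            rw [smul_smul, mul_inv_cancel₀ h0, one_smul]
        _ = R • ((1 - δ) • v) := by rw [h1]
        _ = (R * (1 - δ)) • v := by rw [smul_smul]
  -- degree of H-vertices in svc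
  have hdegN : ∀ w : Fin (t i₀),
      cdeg (svc G t H) (Sum.inr (Sum.inr ⟨i₀, w⟩)) = rr i₀ + 1 := by
    intro w
    have e1 : ∀ j : Fin n,
        (svc G t H).Adj (Sum.inr (Sum.inr ⟨i₀, w⟩)) (Sum.inl j) ↔ j = i₀ := by
      intro j; rw [SimpleGraph.adj_comm]; exact svc_adj_inl_sig G t H j i₀ w
    have e2 : ∀ e : G.edgeSet,
        ¬ (svc G t H).Adj (Sum.inr (Sum.inr ⟨i₀, w⟩)) (Sum.inr (Sum.inl e)) := by
      intro e h; exact svc_not_adj_edge_sig G t H e i₀ w h.symm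
    unfold cdeg
    rw [SimpleGraph.degree, SimpleGraph.neighborFinset_eq_filter, Finset.card_filter,
      Fintype.sum_sum_type, Fintype.sum_sum_type, ← Finset.univ_sigma_univ,
      Finset.sum_sigma]
    have p1 : (∑ j : Fin n,
        if (svc G t H).Adj (Sum.inr (Sum.inr ⟨i₀, w⟩)) (Sum.inl j) then 1 else 0) = 1 := by
      simp only [e1]
      simp
    have p2 : (∑ e : G.edgeSet,
        if (svc G t H).Adj (Sum.inr (Sum.inr ⟨i₀, w⟩)) (Sum.inr (Sum.inl e)) then 1 else 0)
        = 0 := by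
      simp only [e2]
      simp
    have p3 : (∑ i : Fin n, ∑ w' : Fin (t i),
        if (svc G t H).Adj (Sum.inr (Sum.inr ⟨i₀, w⟩)) (Sum.inr (Sum.inr ⟨i, w'⟩))
        then 1 else 0) = rr i₀ := by
      rw [Finset.sum_eq_single i₀]
      · have e3 : ∀ w' : Fin (t i₀),
            (svc G t H).Adj (Sum.inr (Sum.inr ⟨i₀, w⟩)) (Sum.inr (Sum.inr ⟨i₀, w'⟩)) ↔
              (H i₀).Adj w w' := by
          intro w'
          rw [svc_adj_sig_sig]
          exact ⟨fun ⟨h, ha⟩ => ha, fun ha => ⟨rfl, ha⟩⟩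
        simp only [e3]
        rw [← hH i₀ w]
        unfold cdeg
        rw [SimpleGraph.degree, SimpleGraph.neighborFinset_eq_filter, Finset.card_filter]
      · intro i _ hi
        apply Finset.sum_eq_zero
        intro w' _
        rw [if_neg]
        rw [svc_adj_sig_sig]
        rintro ⟨h, -⟩
        exact hi h.symm
      · intro h; exact absurd (Finset.mem_univ i₀) h
    rw [p1, p2, p3]
    omega
  have hdeg : ∀ w : Fin (t i₀),
      ((cdeg (svc G t H) (Sum.inr (Sum.inr ⟨i₀, w⟩)) : ℕ) : ℝ) = R + 1 := by
    intro w; rw [hdegN w]; push_cast [hRdef]; ring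
  have hsq1 : (Real.sqrt (R + 1))⁻¹ * (Real.sqrt (R + 1))⁻¹ = (R + 1)⁻¹ := by
    rw [← mul_inv, Real.mul_self_sqrt (by positivity)]
  set c : (Fin n ⊕ (↑G.edgeSet ⊕ Σ i : Fin n, Fin (t i))) → ℝ :=
    fun k => (Real.sqrt (cdeg (svc G t H) k))⁻¹ with hc
  set x : (Fin n ⊕ (↑G.edgeSet ⊕ Σ i : Fin n, Fin (t i))) → ℝ :=
    Sum.elim (fun _ => 0) (Sum.elim (fun _ => 0)
      (fun s => if h : s.1 = i₀ then v (h ▸ s.2) else 0)) with hx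
  have hx0 : ∀ w : Fin (t i₀), x (Sum.inr (Sum.inr ⟨i₀, w⟩)) = v w := by
    intro w
    simp only [hx, Sum.elim_inr, dif_pos]
  have hcc : ∀ w : Fin (t i₀),
      c (Sum.inr (Sum.inr ⟨i₀, w⟩)) = (Real.sqrt (R + 1))⁻¹ := by
    intro w; rw [hc]; simp only; rw [hdeg w]
  refine ⟨x, ?_, ?_⟩
  · obtain ⟨w, hw⟩ := Function.ne_iff.mp hv0
    intro h
    apply hw
    rw [← hx0 w, h]; rfl
  · funext j
    have hmul : (normLap (svc G t H)).mulVec x j =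
        x j - c j * ∑ k, adjM (svc G t H) j k * (c k * x k) := by
      unfold normLap
      rw [← hc, Matrix.sub_mulVec, Matrix.one_mulVec, Pi.sub_apply]
      congr 1
      simp only [Matrix.mulVec, dotProduct, Matrix.mul_diagonal, Matrix.diagonal_mul,
        Finset.mul_sum]
      apply Finset.sum_congr rfl; intro k _; ring
    have hsum : ∑ k, adjM (svc G t H) j k * (c k * x k)
        = (Real.sqrt (R + 1))⁻¹ * ∑ w : Fin (t i₀),
            adjM (svc G t H) j (Sum.inr (Sum.inr ⟨i₀, w⟩)) * v w := by
      rw [Fintype.sum_sum_type, Fintype.sum_sum_type, ← Finset.univ_sigma_univ,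
        Finset.sum_sigma]
      have z1 : (∑ a : Fin n, adjM (svc G t H) j (Sum.inl a)
          * (c (Sum.inl a) * x (Sum.inl a))) = 0 := by
        apply Finset.sum_eq_zero; intro a _
        simp [hx]
      have z2 : (∑ e : ↑G.edgeSet, adjM (svc G t H) j (Sum.inr (Sum.inl e))
          * (c (Sum.inr (Sum.inl e)) * x (Sum.inr (Sum.inl e)))) = 0 := by
        apply Finset.sum_eq_zero; intro e _
        simp [hx]
      rw [z1, z2, zero_add, zero_add]
      rw [Finset.sum_eq_single i₀]
      · rw [Finset.mul_sum]
        apply Finset.sum_congr rfl; intro w' _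
        rw [hx0 w', hcc w']
        ring
      · intro i _ hi
        apply Finset.sum_eq_zero; intro w' _
        have hz : x (Sum.inr (Sum.inr ⟨i, w'⟩)) = 0 := by
          simp [hx, hi]
        rw [hz]; ring
      · intro h; exact absurd (Finset.mem_univ i₀) h
    rw [Pi.smul_apply, smul_eq_mul, hmul, hsum]
    obtain a | (e | ⟨i, w⟩) := j
    · have hs : (∑ w : Fin (t i₀),
          adjM (svc G t H) (Sum.inl a) (Sum.inr (Sum.inr ⟨i₀, w⟩)) * v w) = 0 := by
        by_cases ha : a = i₀
        · subst ha
          have h1 : ∀ w : Fin (t a),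
              adjM (svc G t H) (Sum.inl a) (Sum.inr (Sum.inr ⟨a, w⟩)) = 1 := by
            intro w
            simp [adjM, svc_adj_inl_sig]
          simp only [h1, one_mul]
          exact hvs
        · apply Finset.sum_eq_zero; intro w _
          have : adjM (svc G t H) (Sum.inl a) (Sum.inr (Sum.inr ⟨i₀, w⟩)) = 0 := by
            simp [adjM, svc_adj_inl_sig, ha]
          rw [this]; ring
      rw [hs]
      simp [hx]
    · have hs : (∑ w : Fin (t i₀),
          adjM (svc G t H) (Sum.inr (Sum.inl e)) (Sum.inr (Sum.inr ⟨i₀, w⟩)) * v w) = 0 := by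
        apply Finset.sum_eq_zero; intro w _
        have : adjM (svc G t H) (Sum.inr (Sum.inl e)) (Sum.inr (Sum.inr ⟨i₀, w⟩)) = 0 := by
          simp [adjM, svc_not_adj_edge_sig]
        rw [this]; ring
      rw [hs]
      simp [hx]
    · by_cases hi : i = i₀
      · subst hi
        have hs : (∑ w' : Fin (t i),
            adjM (svc G t H) (Sum.inr (Sum.inr ⟨i, w⟩)) (Sum.inr (Sum.inr ⟨i, w'⟩)) * v w')
            = (R * (1 - δ)) * v w := by
          have e3 : ∀ w' : Fin (t i),
              adjM (svc G t H) (Sum.inr (Sum.inr ⟨i, w⟩)) (Sum.inr (Sum.inr ⟨i, w'⟩))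
              = adjM (H i) w w' := by
            intro w'
            have : (svc G t H).Adj (Sum.inr (Sum.inr ⟨i, w⟩)) (Sum.inr (Sum.inr ⟨i, w'⟩)) ↔
                (H i).Adj w w' := by
              rw [svc_adj_sig_sig]
              exact ⟨fun ⟨h, ha⟩ => ha, fun ha => ⟨rfl, ha⟩⟩
            simp [adjM, this]
          simp only [e3]
          have := congrFun hA w
          simpa [Matrix.mulVec, dotProduct] using this
        rw [hs, hx0 w, hcc w]
        have hr1 : R + 1 > 0 := by positivity
        field_simp [hsq1]
        rw [Real.sq_sqrt (by linarith : (0:ℝ) ≤ R + 1)]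
        ring
      · have hs : (∑ w' : Fin (t i₀),
            adjM (svc G t H) (Sum.inr (Sum.inr ⟨i, w⟩)) (Sum.inr (Sum.inr ⟨i₀, w'⟩)) * v w')
            = 0 := by
          apply Finset.sum_eq_zero; intro w' _
          have : adjM (svc G t H) (Sum.inr (Sum.inr ⟨i, w⟩)) (Sum.inr (Sum.inr ⟨i₀, w'⟩))
              = 0 := by
            have : ¬ (svc G t H).Adj (Sum.inr (Sum.inr ⟨i, w⟩)) (Sum.inr (Sum.inr ⟨i₀, w'⟩)) := by
              rw [svc_adj_sig_sig]
              rintro ⟨h, -⟩; exact hi h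
            simp [adjM, this]
          rw [this]; ring
        rw [hs]
        simp [hx, hi]
end

section
/- Let G be a connected r-regular graph with r ≥ 2, with n vertices and m edges (so m = nr/2 ≥ n), and for each i = 1,…,n let H_i be an r_i-regular graph on t_i ≥ 1 vertices. Then 1 is an eigenvalue of the normalized Laplacian of the generalized subdivision-vertex corona S(G)⊙∧_{i=1}^n H_i of multiplicity at least m − n; equivalently, (x − 1)^{m−n} divides the characteristic polynomial of 𝓛(S(G)⊙∧_{i=1}^n H_i). -/
open Matrix Polynomial

section aux
variable {V : Type*} [Fintype V] [DecidableEq V]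

lemma charpoly_diagonal' (w : V → ℝ) :
    (Matrix.diagonal w).charpoly = ∏ i, (X - C (w i)) := by
  have h : charmatrix (Matrix.diagonal w) = Matrix.diagonal (fun i => X - C (w i)) := by
    ext i j
    by_cases h : i = j
    · subst h; simp [charmatrix_apply_eq]
    · simp [charmatrix_apply_ne _ _ _ h, Matrix.diagonal_apply_ne _ h]
  rw [Matrix.charpoly, h, Matrix.det_diagonal]

lemma charpoly_unitary_conj (U D : Matrix V V ℝ) (h1 : U * star U = 1) :
    (U * D * star U).charpoly = D.charpoly := by
  set W := star U with hW
  have hUW : U.map ⇑(C : ℝ →+* ℝ[X]) * W.map ⇑(C : ℝ →+* ℝ[X]) = 1 := by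
    rw [← Matrix.map_mul, h1]
    exact Matrix.map_one _ (map_zero _) (map_one _)
  have hcomm : ∀ (A : Matrix V V ℝ[X]),
      A * Matrix.scalar V (X : ℝ[X]) = Matrix.scalar V (X : ℝ[X]) * A := by
    intro A
    ext i j
    simp [Matrix.scalar_apply, Matrix.mul_diagonal, Matrix.diagonal_mul, mul_comm]
  have key : U.map ⇑(C : ℝ →+* ℝ[X]) * charmatrix D * W.map ⇑(C : ℝ →+* ℝ[X])
      = charmatrix (U * D * W) := by
    unfold charmatrix
    rw [RingHom.mapMatrix_apply, RingHom.mapMatrix_apply, Matrix.map_mul, Matrix.map_mul]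
    rw [mul_sub, sub_mul]
    congr 1
    rw [hcomm, mul_assoc, hUW, mul_one]
  rw [Matrix.charpoly, Matrix.charpoly, ← key, Matrix.det_mul, Matrix.det_mul]
  have hd1 : (U.map ⇑(C : ℝ →+* ℝ[X])).det * (W.map ⇑(C : ℝ →+* ℝ[X])).det = 1 := by
    rw [← Matrix.det_mul, hUW, Matrix.det_one]
  calc (U.map ⇑(C : ℝ →+* ℝ[X])).det * (charmatrix D).det * (W.map ⇑(C : ℝ →+* ℝ[X])).det
      = (U.map ⇑(C : ℝ →+* ℝ[X])).det * (W.map ⇑(C : ℝ →+* ℝ[X])).det * (charmatrix D).det := by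
        ring
    _ = (charmatrix D).det := by rw [hd1, one_mul]

lemma pow_sub_one_dvd_charpoly (M : Matrix V V ℝ) (hM : M.IsHermitian) (k : ℕ)
    (hk : k + (M - 1).rank ≤ Fintype.card V) :
    ((X : Polynomial ℝ) - 1) ^ k ∣ M.charpoly := by
  set U : Matrix V V ℝ := (Matrix.IsHermitian.eigenvectorUnitary hM : Matrix V V ℝ) with hU
  have hU1 : U * star U = 1 :=
    Matrix.mem_unitaryGroup_iff.mp (Matrix.IsHermitian.eigenvectorUnitary hM).2
  have hU2 : star U * U = 1 :=
    Matrix.mem_unitaryGroup_iff'.mp (Matrix.IsHermitian.eigenvectorUnitary hM).2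
  set lam := hM.eigenvalues with hlam
  have hspec : M = U * Matrix.diagonal lam * star U := by
    have := hM.spectral_theorem
    simpa [RCLike.ofReal_real_eq_id] using this
  have hchar : M.charpoly = ∏ i, (X - C (lam i)) := by
    rw [hspec, charpoly_unitary_conj _ _ hU1, charpoly_diagonal']
  -- rank of M - 1
  have hM1 : M - 1 = U * Matrix.diagonal (fun i => lam i - 1) * star U := by
    have hd : Matrix.diagonal (fun i => lam i - 1) = Matrix.diagonal lam - 1 := by
      rw [← Matrix.diagonal_one, Matrix.diagonal_sub]
    rw [hspec, hd, Matrix.mul_sub, Matrix.sub_mul, mul_one, hU1]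
  have hdetU : IsUnit U.det := by
    have : U.det * (star U).det = 1 := by rw [← Matrix.det_mul, hU1, Matrix.det_one]
    exact ⟨⟨U.det, (star U).det, this, by rw [mul_comm]; exact this⟩, rfl⟩
  have hdetW : IsUnit (star U).det := by
    have : (star U).det * U.det = 1 := by rw [← Matrix.det_mul, hU2, Matrix.det_one]
    exact ⟨⟨(star U).det, U.det, this, by rw [mul_comm]; exact this⟩, rfl⟩
  have hrank : (M - 1).rank = Fintype.card {i // lam i - 1 ≠ 0} := by
    rw [hM1, mul_assoc, Matrix.rank_mul_eq_right_of_isUnit_det _ _ hdetU,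
      Matrix.rank_mul_eq_left_of_isUnit_det _ _ hdetW, Matrix.rank_diagonal]
  -- counting
  classical
  set S : Finset V := Finset.univ.filter (fun i => lam i = 1) with hS
  have hcard : Fintype.card {i // lam i - 1 ≠ 0}
      = (Finset.univ.filter (fun i => ¬ lam i = 1)).card := by
    rw [Fintype.card_subtype]
    congr 1
    apply Finset.filter_congr
    intro i _
    constructor
    · intro h; intro h'; apply h; rw [h']; ring
    · intro h h'; apply h; linarith [sub_eq_zero.mp h']
  have hsplit : S.card + (Finset.univ.filter (fun i => ¬ lam i = 1)).card = Fintype.card V := by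
    rw [hS, Finset.card_filter_add_card_filter_not]
    rfl
  have hkS : k ≤ S.card := by omega
  have hdvd1 : ((X : Polynomial ℝ) - 1) ^ S.card ∣ M.charpoly := by
    rw [hchar]
    have : ((X : Polynomial ℝ) - 1) ^ S.card = ∏ i ∈ S, (X - C (lam i)) := by
      rw [Finset.prod_congr rfl (fun i hi => ?_), Finset.prod_const]
      rw [hS] at hi
      rw [(Finset.mem_filter.mp hi).2, Polynomial.C_1]
    rw [this]
    exact Finset.prod_dvd_prod_of_subset S Finset.univ _ (Finset.subset_univ S)
  exact dvd_trans (pow_dvd_pow _ hkS) hdvd1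

end aux

theorem stmt3 {n m r : ℕ} (hr : 2 ≤ r)
    (G : SimpleGraph (Fin n)) [DecidableRel G.Adj]
    (hconn : G.Connected) (hG : ∀ v, cdeg G v = r)
    (hm : G.edgeFinset.card = m)
    (t : Fin n → ℕ) (ht : ∀ i, 1 ≤ t i)
    (rr : Fin n → ℕ) (H : ∀ i : Fin n, SimpleGraph (Fin (t i)))
    (hH : ∀ i w, cdeg (H i) w = rr i) :
    ((X : Polynomial ℝ) - 1) ^ (m - n) ∣ (normLap (svc G t H)).charpoly := by
  classical
  set G' := svc G t H with hG'def
  set M := normLap G' with hMdef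
  set d : Matrix (Fin n ⊕ (↥G.edgeSet ⊕ Σ i : Fin n, Fin (t i)))
      (Fin n ⊕ (↥G.edgeSet ⊕ Σ i : Fin n, Fin (t i))) ℝ :=
    Matrix.diagonal (fun v => (Real.sqrt (cdeg G' v))⁻¹) with hd
  have hMeq : M = 1 - d * adjM G' * d := rfl
  -- symmetry of the adjacency matrix
  have hAsymm : (adjM G')ᴴ = adjM G' := by
    ext i j
    simp only [Matrix.conjTranspose_apply, star_trivial, adjM, SimpleGraph.adjMatrix_apply]
    congr 1
    exact propext (SimpleGraph.adj_comm _ _ _)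
  have hdH : dᴴ = d := by
    rw [hd, Matrix.diagonal_conjTranspose]
    congr 1
  have hM : M.IsHermitian := by
    show Mᴴ = M
    rw [hMeq, Matrix.conjTranspose_sub, Matrix.conjTranspose_one,
      Matrix.conjTranspose_mul, Matrix.conjTranspose_mul, hdH, hAsymm, mul_assoc]
  -- non-adjacency facts
  have hnadj1 : ∀ (e' e : ↥G.edgeSet), ¬ G'.Adj (Sum.inr (Sum.inl e')) (Sum.inr (Sum.inl e)) := by
    intro e' e h
    rw [hG'def] at h
    simp only [svc, SimpleGraph.fromRel_adj] at h
    obtain ⟨-, h | h⟩ := h <;> exact h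
  have hnadj2 : ∀ (p : Σ i : Fin n, Fin (t i)) (e : ↥G.edgeSet),
      ¬ G'.Adj (Sum.inr (Sum.inr p)) (Sum.inr (Sum.inl e)) := by
    rintro ⟨i, w⟩ e h
    rw [hG'def] at h
    simp only [svc, SimpleGraph.fromRel_adj] at h
    obtain ⟨-, h | h⟩ := h <;> exact h
  have hA0 : ∀ (e' e : ↥G.edgeSet),
      adjM G' (Sum.inr (Sum.inl e')) (Sum.inr (Sum.inl e)) = 0 := by
    intro e' e
    simp only [adjM, SimpleGraph.adjMatrix_apply]
    exact if_neg (hnadj1 e' e)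
  have hA0' : ∀ (p : Σ i : Fin n, Fin (t i)) (e : ↥G.edgeSet),
      adjM G' (Sum.inr (Sum.inr p)) (Sum.inr (Sum.inl e)) = 0 := by
    intro p e
    simp only [adjM, SimpleGraph.adjMatrix_apply]
    exact if_neg (hnadj2 p e)
  -- the incidence-type matrix
  set B : Matrix (Fin n) ↥G.edgeSet ℝ :=
    Matrix.of (fun v e => adjM G' (Sum.inl v) (Sum.inr (Sum.inl e))
      * (Real.sqrt (cdeg G' (Sum.inr (Sum.inl e))))⁻¹) with hB
  -- the embedding of edge-vectors
  set ψ : (↥G.edgeSet → ℝ) →ₗ[ℝ] ((Fin n ⊕ (↥G.edgeSet ⊕ Σ i : Fin n, Fin (t i))) → ℝ) :=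
    { toFun := fun y => Sum.elim 0 (Sum.elim y 0)
      map_add' := by
        intro y z
        funext w
        rcases w with v | (e | p) <;> simp
      map_smul' := by
        intro c y
        funext w
        rcases w with v | (e | p) <;> simp } with hψ
  have hinj : Function.Injective ψ := by
    intro y z h
    funext e
    exact congrFun h (Sum.inr (Sum.inl e))
  -- kernel inclusion
  have hker : ∀ y ∈ LinearMap.ker B.mulVecLin, ψ y ∈ LinearMap.ker (M - 1).mulVecLin := by
    intro y hy
    rw [LinearMap.mem_ker, Matrix.mulVecLin_apply] at hy ⊢
    have hM1 : M - 1 = -(d * adjM G' * d) := by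
      rw [hMeq]; exact sub_sub_cancel_left _ _
    rw [hM1, Matrix.neg_mulVec, neg_eq_zero, ← Matrix.mulVec_mulVec, ← Matrix.mulVec_mulVec]
    have hx : d *ᵥ (ψ y) = Sum.elim (0 : Fin n → ℝ) (Sum.elim
        (fun e => (Real.sqrt (cdeg G' (Sum.inr (Sum.inl e))))⁻¹ * y e)
        (0 : ((Σ i : Fin n, Fin (t i)) → ℝ))) := by
      funext w
      rw [hd, Matrix.mulVec_diagonal]
      rcases w with v | (e | p) <;> simp [hψ]
    rw [hx]
    have hzero : adjM G' *ᵥ (Sum.elim (0 : Fin n → ℝ) (Sum.elim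
        (fun e => (Real.sqrt (cdeg G' (Sum.inr (Sum.inl e))))⁻¹ * y e)
        (0 : ((Σ i : Fin n, Fin (t i)) → ℝ)))) = 0 := by
      funext w
      show ∑ u, adjM G' w u * _ = 0
      rw [Fintype.sum_sum_type]
      have h1 : ∀ a : Fin n, adjM G' w (Sum.inl a) * (Sum.elim (0 : Fin n → ℝ) (Sum.elim
          (fun e => (Real.sqrt (cdeg G' (Sum.inr (Sum.inl e))))⁻¹ * y e)
          (0 : ((Σ i : Fin n, Fin (t i)) → ℝ)))) (Sum.inl a) = 0 := by
        intro a; simp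
      rw [Finset.sum_congr rfl (fun a _ => h1 a), Finset.sum_const, smul_zero, zero_add,
        Fintype.sum_sum_type]
      have h2 : ∀ p : Σ i : Fin n, Fin (t i), adjM G' w (Sum.inr (Sum.inr p))
          * (Sum.elim (0 : Fin n → ℝ) (Sum.elim
          (fun e => (Real.sqrt (cdeg G' (Sum.inr (Sum.inl e))))⁻¹ * y e)
          (0 : ((Σ i : Fin n, Fin (t i)) → ℝ))))
          (Sum.inr (Sum.inr p)) = 0 := by
        intro p; simp
      rw [Finset.sum_congr rfl (fun p _ => h2 p), Finset.sum_const, smul_zero, add_zero]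
      -- remaining: sum over edges
      rcases w with v | (e' | p)
      · have h3 := congrFun hy v
        rw [Matrix.mulVec, dotProduct, Pi.zero_apply] at h3
        rw [← h3]
        refine Finset.sum_congr rfl (fun e _ => ?_)
        simp only [Sum.elim_inr, Sum.elim_inl, hB, Matrix.of_apply]
        ring
      · refine Finset.sum_eq_zero (fun e _ => ?_)
        rw [hA0 e' e, zero_mul]
      · refine Finset.sum_eq_zero (fun e _ => ?_)
        rw [hA0' p e, zero_mul]
    rw [hzero, Matrix.mulVec_zero]
  -- dimension counting
  have hEcard : Fintype.card ↥G.edgeSet = m := by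
    rw [← hm, SimpleGraph.edgeFinset]
    exact (Set.toFinset_card _).symm
  have hBrange : Module.finrank ℝ (LinearMap.range B.mulVecLin) ≤ n := by
    have h := Submodule.finrank_le (LinearMap.range B.mulVecLin)
    rwa [Module.finrank_fintype_fun_eq_card, Fintype.card_fin] at h
  have hBsum : Module.finrank ℝ (LinearMap.range B.mulVecLin)
      + Module.finrank ℝ (LinearMap.ker B.mulVecLin) = m := by
    rw [LinearMap.finrank_range_add_finrank_ker, Module.finrank_fintype_fun_eq_card, hEcard]
  have hBker : m - n ≤ Module.finrank ℝ (LinearMap.ker B.mulVecLin) := by omega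
  have hle : Submodule.map ψ (LinearMap.ker B.mulVecLin) ≤ LinearMap.ker (M - 1).mulVecLin := by
    rintro x ⟨y, hy, rfl⟩
    exact hker y hy
  have hfr : Module.finrank ℝ (LinearMap.ker B.mulVecLin)
      = Module.finrank ℝ (Submodule.map ψ (LinearMap.ker B.mulVecLin)) :=
    LinearEquiv.finrank_eq (Submodule.equivMapOfInjective ψ hinj _)
  have hnull : m - n ≤ Module.finrank ℝ (LinearMap.ker (M - 1).mulVecLin) := by
    calc m - n ≤ Module.finrank ℝ (LinearMap.ker B.mulVecLin) := hBker
      _ = Module.finrank ℝ (Submodule.map ψ (LinearMap.ker B.mulVecLin)) := hfr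
      _ ≤ Module.finrank ℝ (LinearMap.ker (M - 1).mulVecLin) := Submodule.finrank_mono hle
  have hsum2 : Module.finrank ℝ (LinearMap.range (M - 1).mulVecLin)
      + Module.finrank ℝ (LinearMap.ker (M - 1).mulVecLin)
      = Fintype.card (Fin n ⊕ (↥G.edgeSet ⊕ Σ i : Fin n, Fin (t i))) := by
    rw [LinearMap.finrank_range_add_finrank_ker, Module.finrank_fintype_fun_eq_card]
  have hrankdef : (M - 1).rank = Module.finrank ℝ (LinearMap.range (M - 1).mulVecLin) := rfl
  exact pow_sub_one_dvd_charpoly M hM (m - n) (by omega)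
end

section
/- Let G be a connected r-regular graph (r ≥ 2) with vertex set {v_1,…,v_n}, and for each i = 1,…,n let H_i be an r_1-regular graph on t ≥ 1 vertices (all H_i have the same number of vertices t and the same degree r_1, but may be different graphs). Let μ be an eigenvalue of 𝓛(G). Then every real root x of the cubic equation 2(r + t + r·r_1 + r_1·t)x³ − 2(2r·r_1 + 2r_1·t + 3r + 3t)x² + (2t·r_1 + 4r + 4t + r·r_1·μ + r·μ)x − r·μ = 0 is an eigenvalue of the normalized Laplacian of the generalized subdivision-vertex corona S(G)⊙∧_{i=1}^n H_i. -/
open Matrix Polynomial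

/-! ### Auxiliary definitions and lemmas -/

open Finset

/-- Indicator that a vertex belongs to an unordered pair, as a real number. -/
noncomputable def inc {n : ℕ} (v : Fin n) (e : Sym2 (Fin n)) : ℝ :=
  letI := Classical.propDecidable (v ∈ e)
  if v ∈ e then 1 else 0

lemma inc_pos {n : ℕ} {v : Fin n} {e : Sym2 (Fin n)} (h : v ∈ e) : inc v e = 1 := by
  unfold inc; exact if_pos h

lemma inc_neg {n : ℕ} {v : Fin n} {e : Sym2 (Fin n)} (h : v ∉ e) : inc v e = 0 := by
  unfold inc; exact if_neg h

lemma adjM_pos {V : Type*} [Fintype V] [DecidableEq V] {G : SimpleGraph V} {u v : V}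
    (h : G.Adj u v) : adjM G u v = 1 := by
  unfold adjM; simp [h]

lemma adjM_neg {V : Type*} [Fintype V] [DecidableEq V] {G : SimpleGraph V} {u v : V}
    (h : ¬ G.Adj u v) : adjM G u v = 0 := by
  unfold adjM; simp [h]

lemma cdeg_eq_degree {V : Type*} [Fintype V] (G : SimpleGraph V) [DecidableRel G.Adj] (v : V) :
    cdeg G v = G.degree v := by
  unfold cdeg
  congr!

lemma cdeg_sum {V : Type*} [Fintype V] [DecidableEq V] (G : SimpleGraph V) (v : V) :
    (cdeg G v : ℝ) = ∑ u, adjM G v u := by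
  classical
  unfold cdeg adjM
  rw [SimpleGraph.degree, SimpleGraph.neighborFinset_eq_filter, Finset.card_filter]
  push_cast
  refine Finset.sum_congr rfl fun u _ => ?_
  by_cases h : G.Adj v u <;> simp [h]

lemma normLap_mulVec_apply {V : Type*} [Fintype V] [DecidableEq V] (G : SimpleGraph V)
    (f : V → ℝ) (v : V) :
    (normLap G *ᵥ f) v
      = f v - (Real.sqrt (cdeg G v))⁻¹
          * ∑ u, adjM G v u * ((Real.sqrt (cdeg G u))⁻¹ * f u) := by
  unfold normLap
  rw [Matrix.sub_mulVec, Matrix.one_mulVec]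
  simp only [Pi.sub_apply]
  congr 1
  rw [← Matrix.mulVec_mulVec, ← Matrix.mulVec_mulVec, Matrix.mulVec_diagonal,
    Matrix.mulVec, dotProduct]
  have : ∀ u, (Matrix.diagonal (fun v => (Real.sqrt (cdeg G v))⁻¹) *ᵥ f) u
      = (Real.sqrt (cdeg G u))⁻¹ * f u := fun u => Matrix.mulVec_diagonal _ _ _
  simp only [this]

section SvcAdj

variable {n t : ℕ} (G : SimpleGraph (Fin n)) [DecidableRel G.Adj]
  (H : Fin n → SimpleGraph (Fin t))

@[simp] lemma svc_adjM_inl_inl (v v' : Fin n) :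
    adjM (svc G (fun _ => t) H) (Sum.inl v) (Sum.inl v') = 0 := by
  refine adjM_neg ?_
  simp [svc, SimpleGraph.fromRel_adj]

@[simp] lemma svc_adjM_inl_edge (v : Fin n) (e : G.edgeSet) :
    adjM (svc G (fun _ => t) H) (Sum.inl v) (Sum.inr (Sum.inl e)) = inc v e := by
  by_cases h : v ∈ (e : Sym2 (Fin n))
  · rw [inc_pos h]
    refine adjM_pos ?_
    simp [svc, SimpleGraph.fromRel_adj, h]
  · rw [inc_neg h]
    refine adjM_neg ?_
    simp [svc, SimpleGraph.fromRel_adj, h]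

@[simp] lemma svc_adjM_edge_inl (v : Fin n) (e : G.edgeSet) :
    adjM (svc G (fun _ => t) H) (Sum.inr (Sum.inl e)) (Sum.inl v) = inc v e := by
  by_cases h : v ∈ (e : Sym2 (Fin n))
  · rw [inc_pos h]
    refine adjM_pos ?_
    simp [svc, SimpleGraph.fromRel_adj, h]
  · rw [inc_neg h]
    refine adjM_neg ?_
    simp [svc, SimpleGraph.fromRel_adj, h]

@[simp] lemma svc_adjM_inl_h (v : Fin n) (i : Fin n) (w : Fin t) :
    adjM (svc G (fun _ => t) H) (Sum.inl v) (Sum.inr (Sum.inr ⟨i, w⟩))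
      = if v = i then 1 else 0 := by
  by_cases h : v = i
  · rw [if_pos h]
    refine adjM_pos ?_
    simp [svc, SimpleGraph.fromRel_adj, h]
  · rw [if_neg h]
    refine adjM_neg ?_
    simp [svc, SimpleGraph.fromRel_adj, h]

@[simp] lemma svc_adjM_h_inl (v : Fin n) (i : Fin n) (w : Fin t) :
    adjM (svc G (fun _ => t) H) (Sum.inr (Sum.inr ⟨i, w⟩)) (Sum.inl v)
      = if v = i then 1 else 0 := by
  by_cases h : v = i
  · rw [if_pos h]
    refine adjM_pos ?_
    simp [svc, SimpleGraph.fromRel_adj, h]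
  · rw [if_neg h]
    refine adjM_neg ?_
    simp [svc, SimpleGraph.fromRel_adj, h]

@[simp] lemma svc_adjM_edge_edge (e e' : G.edgeSet) :
    adjM (svc G (fun _ => t) H) (Sum.inr (Sum.inl e)) (Sum.inr (Sum.inl e')) = 0 := by
  refine adjM_neg ?_
  simp [svc, SimpleGraph.fromRel_adj]

@[simp] lemma svc_adjM_edge_h (e : G.edgeSet) (i : Fin n) (w : Fin t) :
    adjM (svc G (fun _ => t) H) (Sum.inr (Sum.inl e)) (Sum.inr (Sum.inr ⟨i, w⟩)) = 0 := by
  refine adjM_neg ?_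
  simp [svc, SimpleGraph.fromRel_adj]

@[simp] lemma svc_adjM_h_edge (e : G.edgeSet) (i : Fin n) (w : Fin t) :
    adjM (svc G (fun _ => t) H) (Sum.inr (Sum.inr ⟨i, w⟩)) (Sum.inr (Sum.inl e)) = 0 := by
  refine adjM_neg ?_
  simp [svc, SimpleGraph.fromRel_adj]

lemma svc_adj_h_h (i j : Fin n) (w w' : Fin t) :
    (svc G (fun _ => t) H).Adj (Sum.inr (Sum.inr ⟨i, w⟩)) (Sum.inr (Sum.inr ⟨j, w'⟩))
      ↔ i = j ∧ (H j).Adj (show Fin t from w) w' := by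
  simp only [svc, SimpleGraph.fromRel_adj]
  constructor
  · rintro ⟨hne, (⟨rfl, h⟩ | ⟨rfl, h⟩)⟩
    · exact ⟨rfl, h⟩
    · exact ⟨rfl, h.symm⟩
  · rintro ⟨rfl, h⟩
    exact ⟨by simp [h.ne], Or.inl ⟨rfl, h⟩⟩

@[simp] lemma svc_adjM_h_h (i j : Fin n) (w w' : Fin t) :
    adjM (svc G (fun _ => t) H) (Sum.inr (Sum.inr ⟨i, w⟩)) (Sum.inr (Sum.inr ⟨j, w'⟩))
      = if i = j then adjM (H j) w w' else 0 := by
  by_cases h : i = j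
  · subst h
    rw [if_pos rfl]
    by_cases h2 : (H i).Adj w w'
    · rw [adjM_pos h2]
      exact adjM_pos ((svc_adj_h_h G H i i w w').mpr ⟨rfl, h2⟩)
    · rw [adjM_neg h2]
      refine adjM_neg fun hc => h2 ?_
      exact ((svc_adj_h_h G H i i w w').mp hc).2
  · rw [if_neg h]
    refine adjM_neg fun hc => h ?_
    exact ((svc_adj_h_h G H i j w w').mp hc).1

end SvcAdj

lemma sum_inc_sym2 {n : ℕ} {u v : Fin n} (huv : u ≠ v) (g : Fin n → ℝ) :
    ∑ x, inc x s(u, v) * g x = g u + g v := by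
  have key : ∀ x : Fin n, inc x s(u, v) * g x
      = (if x = u then g x else 0) + (if x = v then g x else 0) := by
    intro x
    by_cases h1 : x = u
    · subst h1
      rw [inc_pos (by simp), if_pos rfl, if_neg huv]
      ring
    · by_cases h2 : x = v
      · subst h2
        rw [inc_pos (by simp), if_neg h1, if_pos rfl]
        ring
      · rw [inc_neg (by simp [h1, h2]), if_neg h1, if_neg h2]
        ring
  simp only [key, Finset.sum_add_distrib]
  rw [Finset.sum_ite_eq' univ u g, Finset.sum_ite_eq' univ v g]
  simp

lemma sum_over_edges_at {n : ℕ} (G : SimpleGraph (Fin n)) [DecidableRel G.Adj]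
    (v : Fin n) (g : Sym2 (Fin n) → ℝ) :
    ∑ e : G.edgeSet, inc v (e : Sym2 (Fin n)) * g e
      = ∑ u, adjM G v u * g s(v, u) := by
  classical
  have l1 : ∀ e : G.edgeSet, inc v (e : Sym2 (Fin n)) * g e
      = if v ∈ (e : Sym2 (Fin n)) then g e else 0 := fun e => by
    by_cases h : v ∈ (e : Sym2 (Fin n))
    · rw [inc_pos h, if_pos h]; ring
    · rw [inc_neg h, if_neg h]; ring
  have l2 : ∀ u : Fin n, adjM G v u * g s(v, u) = if G.Adj v u then g s(v, u) else 0 := fun u => by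
    by_cases h : G.Adj v u
    · rw [adjM_pos h, if_pos h]; ring
    · rw [adjM_neg h, if_neg h]; ring
  simp only [l1, l2]
  rw [← Finset.sum_filter, ← Finset.sum_filter]
  refine Finset.sum_bij' (fun e he => Sym2.Mem.other' (by simpa using (Finset.mem_filter.mp he).2))
    (fun u hu => ⟨s(v, u), G.mem_edgeSet.mpr (by simpa using (Finset.mem_filter.mp hu).2)⟩)
    ?_ ?_ ?_ ?_ ?_
  · intro e he
    have hv : v ∈ (e : Sym2 (Fin n)) := by simpa using (Finset.mem_filter.mp he).2
    have := Sym2.other_spec' hv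
    simp only [Finset.mem_filter, Finset.mem_univ, true_and]
    rw [← G.mem_edgeSet, this]
    exact e.2
  · intro u hu
    simp [Sym2.mem_iff]
  · intro e he
    have hv : v ∈ (e : Sym2 (Fin n)) := by simpa using (Finset.mem_filter.mp he).2
    exact Subtype.ext (Sym2.other_spec' hv)
  · intro u hu
    have hv : v ∈ s(v, u) := by simp
    exact Sym2.congr_right.mp (Sym2.other_spec' hv)
  · intro e he
    have hv : v ∈ (e : Sym2 (Fin n)) := by simpa using (Finset.mem_filter.mp he).2
    rw [Sym2.other_spec' hv]

section Main

variable {n r t r1 : ℕ} (G : SimpleGraph (Fin n)) [DecidableRel G.Adj]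
  (H : Fin n → SimpleGraph (Fin t))

lemma svc_cdeg_inl (hG : ∀ v, cdeg G v = r) (v : Fin n) :
    ((cdeg (svc G (fun _ => t) H) (Sum.inl v) : ℝ)) = r + t := by
  rw [cdeg_sum, Fintype.sum_sum_type, Fintype.sum_sum_type,
      ← Finset.univ_sigma_univ, Finset.sum_sigma]
  simp only [svc_adjM_inl_inl, svc_adjM_inl_edge, svc_adjM_inl_h]
  have he : (∑ x : G.edgeSet, inc v (x : Sym2 (Fin n))) = (r : ℝ) := by
    have h0 := sum_over_edges_at G v (fun _ => (1 : ℝ))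
    simp only [mul_one] at h0
    rw [h0, ← cdeg_sum, hG]
  have ht' : (∑ x : Fin n, ∑ _w : Fin t, if v = x then (1 : ℝ) else 0) = t := by
    have inner : ∀ x : Fin n, (∑ _w : Fin t, if v = x then (1 : ℝ) else 0)
        = if v = x then (t : ℝ) else 0 := by
      intro x
      by_cases h : v = x <;> simp [h]
    simp only [inner]
    rw [Finset.sum_ite_eq Finset.univ v (fun _ => (t : ℝ))]
    simp
  rw [he, ht']
  simp

lemma svc_cdeg_edge (e : G.edgeSet) :
    ((cdeg (svc G (fun _ => t) H) (Sum.inr (Sum.inl e)) : ℝ)) = 2 := by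
  rw [cdeg_sum, Fintype.sum_sum_type, Fintype.sum_sum_type,
      ← Finset.univ_sigma_univ, Finset.sum_sigma]
  simp only [svc_adjM_edge_inl, svc_adjM_edge_edge, svc_adjM_edge_h]
  obtain ⟨e, he⟩ := e
  induction e using Sym2.ind with
  | _ u v =>
    have huv : u ≠ v := (G.mem_edgeSet.mp he).ne
    have key : ∑ x : Fin n, inc x s(u, v) = 2 := by
      have h0 := sum_inc_sym2 huv (fun _ => (1 : ℝ))
      simp only [mul_one] at h0
      rw [h0]
      norm_num
    simpa using key

lemma svc_cdeg_h (hH : ∀ i w, cdeg (H i) w = r1) (i : Fin n) (w : Fin t) :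
    ((cdeg (svc G (fun _ => t) H) (Sum.inr (Sum.inr ⟨i, w⟩)) : ℝ)) = r1 + 1 := by
  rw [cdeg_sum, Fintype.sum_sum_type, Fintype.sum_sum_type,
      ← Finset.univ_sigma_univ, Finset.sum_sigma]
  simp only [svc_adjM_h_inl, svc_adjM_h_edge, svc_adjM_h_h]
  have h1 : ∑ j : Fin n, ∑ w' : Fin t, (if i = j then adjM (H j) w w' else 0) = (r1 : ℝ) := by
    have inner : ∀ j : Fin n, ∑ w' : Fin t, (if i = j then adjM (H j) w w' else 0)
        = if i = j then (r1 : ℝ) else 0 := by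
      intro j
      by_cases h : i = j
      · subst h
        simp only [if_true, eq_self_iff_true]
        rw [← cdeg_sum, hH]
      · simp [h]
    simp only [inner]
    rw [Finset.sum_ite_eq Finset.univ i (fun _ => (r1 : ℝ))]
    simp
  rw [h1]
  simp [add_comm]

lemma edge_sum_eval (hG : ∀ v, cdeg G v = r) {φ : Fin n → ℝ} {μ : ℝ}
    (heig : ∀ v, ∑ u, adjM G v u * φ u = r * (1 - μ) * φ v) (v : Fin n) :
    ∑ e : G.edgeSet, inc v (e : Sym2 (Fin n)) * (∑ y, inc y (e : Sym2 (Fin n)) * φ y)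
      = r * (2 - μ) * φ v := by
  rw [sum_over_edges_at G v (fun z => ∑ y, inc y z * φ y)]
  have step : ∀ u : Fin n, adjM G v u * (∑ y, inc y s(v, u) * φ y)
      = adjM G v u * φ v + adjM G v u * φ u := by
    intro u
    by_cases h : G.Adj v u
    · rw [sum_inc_sym2 h.ne φ]
      ring
    · rw [adjM_neg h]
      ring
  rw [Finset.sum_congr rfl (fun u _ => step u), Finset.sum_add_distrib, heig]
  have h2 : (∑ u, adjM G v u * φ v) = r * φ v := by
    rw [← Finset.sum_mul, ← cdeg_sum, hG]
  rw [h2]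
  ring

end Main

section Construct

variable {n r t r1 : ℕ} {G : SimpleGraph (Fin n)} [DecidableRel G.Adj]
  {H : Fin n → SimpleGraph (Fin t)}

lemma main_construct (ht : 1 ≤ t)
    (hG : ∀ v, cdeg G v = r) (hH : ∀ i w, cdeg (H i) w = r1)
    (φ : Fin n → ℝ) (hφ0 : φ ≠ 0) (μ x : ℝ)
    (heig : ∀ v, ∑ u, adjM G v u * φ u = r * (1 - μ) * φ v)
    (a b c : ℝ)
    (E1 : (1 - x) * a = (Real.sqrt ((r : ℝ) + t))⁻¹ *
        ((Real.sqrt 2)⁻¹ * ((r : ℝ) * (2 - μ)) * b + (Real.sqrt ((r1 : ℝ) + 1))⁻¹ * t * c))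
    (E2 : (1 - x) * b = (Real.sqrt 2)⁻¹ * (Real.sqrt ((r : ℝ) + t))⁻¹ * a)
    (E3 : (1 - x) * c = (Real.sqrt ((r1 : ℝ) + 1))⁻¹ * (Real.sqrt ((r : ℝ) + t))⁻¹ * a
        + ((Real.sqrt ((r1 : ℝ) + 1))⁻¹) ^ 2 * (r1 : ℝ) * c)
    (hac : a ≠ 0 ∨ c ≠ 0) :
    IsEigenvalue (normLap (svc G (fun _ => t) H)) x := by
  set f : (Fin n ⊕ (G.edgeSet ⊕ Σ _ : Fin n, Fin t)) → ℝ :=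
    Sum.elim (fun i => a * φ i)
      (Sum.elim (fun e => b * ∑ y, inc y (e : Sym2 (Fin n)) * φ y)
        (fun p => c * φ p.1)) with hf
  refine ⟨f, ?_, ?_⟩
  · obtain ⟨v0, hv0⟩ := Function.ne_iff.mp hφ0
    rcases hac with ha | hc
    · intro hf0
      have := congrFun hf0 (Sum.inl v0)
      simp only [hf, Sum.elim_inl, Pi.zero_apply] at this
      rcases mul_eq_zero.mp this with h | h
      · exact ha h
      · exact hv0 h
    · intro hf0
      have := congrFun hf0 (Sum.inr (Sum.inr ⟨v0, ⟨0, ht⟩⟩))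
      simp only [hf, Sum.elim_inr, Pi.zero_apply] at this
      rcases mul_eq_zero.mp this with h | h
      · exact hc h
      · exact hv0 h
  · funext z
    have hd1 := svc_cdeg_inl G H hG
    have hd2 := svc_cdeg_edge G H
    have hd3 := svc_cdeg_h G H hH
    rcases z with v | e | ⟨i, w⟩
    · -- original vertex
      rw [normLap_mulVec_apply, Fintype.sum_sum_type, Fintype.sum_sum_type,
        ← Finset.univ_sigma_univ, Finset.sum_sigma]
      simp only [hf, Sum.elim_inl, Sum.elim_inr, svc_adjM_inl_inl, svc_adjM_inl_edge,
        svc_adjM_inl_h, hd1, hd2, hd3, zero_mul, Finset.sum_const_zero, Pi.smul_apply,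
        smul_eq_mul]
      have hEdge : ∑ e : G.edgeSet,
          inc v (e : Sym2 (Fin n)) * ((Real.sqrt 2)⁻¹ * (b * ∑ y, inc y (e : Sym2 (Fin n)) * φ y))
          = (Real.sqrt 2)⁻¹ * b * (r * (2 - μ) * φ v) := by
        have := edge_sum_eval G hG heig (φ := φ) (μ := μ) v
        calc ∑ e : G.edgeSet,
            inc v (e : Sym2 (Fin n)) * ((Real.sqrt 2)⁻¹ * (b * ∑ y, inc y (e : Sym2 (Fin n)) * φ y))
            = (Real.sqrt 2)⁻¹ * b * ∑ e : G.edgeSet,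
              inc v (e : Sym2 (Fin n)) * (∑ y, inc y (e : Sym2 (Fin n)) * φ y) := by
              rw [Finset.mul_sum]
              exact Finset.sum_congr rfl fun e _ => by ring
          _ = (Real.sqrt 2)⁻¹ * b * (r * (2 - μ) * φ v) := by rw [this]
      have hH' : ∑ i : Fin n, ∑ _w : Fin t,
          (if v = i then (1 : ℝ) else 0) * ((Real.sqrt ((r1 : ℝ) + 1))⁻¹ * (c * φ i))
          = (t : ℝ) * ((Real.sqrt ((r1 : ℝ) + 1))⁻¹ * (c * φ v)) := by
        have inner : ∀ i : Fin n, (∑ _w : Fin t,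
            (if v = i then (1 : ℝ) else 0) * ((Real.sqrt ((r1 : ℝ) + 1))⁻¹ * (c * φ i)))
            = if v = i then (t : ℝ) * ((Real.sqrt ((r1 : ℝ) + 1))⁻¹ * (c * φ i)) else 0 := by
          intro i
          by_cases h : v = i <;> simp [h, Finset.sum_const, mul_comm]
        simp only [inner]
        rw [Finset.sum_ite_eq Finset.univ v
          (fun i => (t : ℝ) * ((Real.sqrt ((r1 : ℝ) + 1))⁻¹ * (c * φ i)))]
        simp
      rw [hEdge, hH']
      have key : a * φ v - (1 - x) * a * φ v = x * (a * φ v) := by ring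
      calc a * φ v - (Real.sqrt ((r : ℝ) + t))⁻¹ *
            (0 + ((Real.sqrt 2)⁻¹ * b * (r * (2 - μ) * φ v)
              + (t : ℝ) * ((Real.sqrt ((r1 : ℝ) + 1))⁻¹ * (c * φ v))))
          = a * φ v - ((Real.sqrt ((r : ℝ) + t))⁻¹ *
            ((Real.sqrt 2)⁻¹ * ((r : ℝ) * (2 - μ)) * b
              + (Real.sqrt ((r1 : ℝ) + 1))⁻¹ * t * c)) * φ v := by ring
        _ = a * φ v - ((1 - x) * a) * φ v := by rw [← E1]
        _ = x * (a * φ v) := by ring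
    · -- subdivision vertex
      rw [normLap_mulVec_apply, Fintype.sum_sum_type, Fintype.sum_sum_type,
        ← Finset.univ_sigma_univ, Finset.sum_sigma]
      simp only [hf, Sum.elim_inl, Sum.elim_inr, svc_adjM_edge_inl, svc_adjM_edge_edge,
        svc_adjM_edge_h, hd1, hd2, hd3, zero_mul, Finset.sum_const_zero, Pi.smul_apply,
        smul_eq_mul]
      have hInl : ∑ v : Fin n,
          inc v (e : Sym2 (Fin n)) * ((Real.sqrt ((r : ℝ) + t))⁻¹ * (a * φ v))
          = (Real.sqrt ((r : ℝ) + t))⁻¹ * a * ∑ y, inc y (e : Sym2 (Fin n)) * φ y := by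
        rw [Finset.mul_sum]
        exact Finset.sum_congr rfl fun v _ => by ring
      rw [hInl]
      calc b * (∑ y, inc y (e : Sym2 (Fin n)) * φ y)
            - (Real.sqrt 2)⁻¹ * ((Real.sqrt ((r : ℝ) + t))⁻¹ * a
                * ∑ y, inc y (e : Sym2 (Fin n)) * φ y + (0 + 0))
          = b * (∑ y, inc y (e : Sym2 (Fin n)) * φ y)
            - ((Real.sqrt 2)⁻¹ * (Real.sqrt ((r : ℝ) + t))⁻¹ * a)
              * (∑ y, inc y (e : Sym2 (Fin n)) * φ y) := by ring
        _ = b * (∑ y, inc y (e : Sym2 (Fin n)) * φ y)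
            - ((1 - x) * b) * (∑ y, inc y (e : Sym2 (Fin n)) * φ y) := by rw [← E2]
        _ = x * (b * ∑ y, inc y (e : Sym2 (Fin n)) * φ y) := by ring
    · -- H vertex
      rw [normLap_mulVec_apply, Fintype.sum_sum_type, Fintype.sum_sum_type,
        ← Finset.univ_sigma_univ, Finset.sum_sigma]
      simp only [hf, Sum.elim_inl, Sum.elim_inr, svc_adjM_h_inl, svc_adjM_h_edge,
        svc_adjM_h_h, hd1, hd2, hd3, zero_mul, Finset.sum_const_zero, Pi.smul_apply,
        smul_eq_mul]
      have hInl : ∑ v : Fin n,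
          (if v = i then (1 : ℝ) else 0) * ((Real.sqrt ((r : ℝ) + t))⁻¹ * (a * φ v))
          = (Real.sqrt ((r : ℝ) + t))⁻¹ * (a * φ i) := by
        have e1 : ∀ v : Fin n, (if v = i then (1 : ℝ) else 0)
            * ((Real.sqrt ((r : ℝ) + t))⁻¹ * (a * φ v))
            = if v = i then (Real.sqrt ((r : ℝ) + t))⁻¹ * (a * φ v) else 0 := by
          intro v
          by_cases h : v = i <;> simp [h]
        simp only [e1]
        rw [Finset.sum_ite_eq' Finset.univ i
          (fun v => (Real.sqrt ((r : ℝ) + t))⁻¹ * (a * φ v))]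
        simp
      have hHH : ∑ j : Fin n, ∑ w' : Fin t,
          (if i = j then adjM (H j) w w' else 0)
            * ((Real.sqrt ((r1 : ℝ) + 1))⁻¹ * (c * φ j))
          = (r1 : ℝ) * ((Real.sqrt ((r1 : ℝ) + 1))⁻¹ * (c * φ i)) := by
        have inner : ∀ j : Fin n, (∑ w' : Fin t,
            (if i = j then adjM (H j) w w' else 0)
              * ((Real.sqrt ((r1 : ℝ) + 1))⁻¹ * (c * φ j)))
            = if i = j then (r1 : ℝ) * ((Real.sqrt ((r1 : ℝ) + 1))⁻¹ * (c * φ j)) else 0 := by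
          intro j
          by_cases h : i = j
          · subst h
            simp only [if_true, eq_self_iff_true]
            have hr1 : ∑ w' : Fin t, adjM (H i) w w' = (r1 : ℝ) := by
              rw [← cdeg_sum, hH]
            calc ∑ w' : Fin t, adjM (H i) w w' * ((Real.sqrt ((r1 : ℝ) + 1))⁻¹ * (c * φ i))
                = (∑ w' : Fin t, adjM (H i) w w') * ((Real.sqrt ((r1 : ℝ) + 1))⁻¹ * (c * φ i)) := by
                  rw [Finset.sum_mul]
              _ = (r1 : ℝ) * ((Real.sqrt ((r1 : ℝ) + 1))⁻¹ * (c * φ i)) := by rw [hr1]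
          · simp [h]
        simp only [inner]
        rw [Finset.sum_ite_eq Finset.univ i
          (fun j => (r1 : ℝ) * ((Real.sqrt ((r1 : ℝ) + 1))⁻¹ * (c * φ j)))]
        simp
      rw [hInl, hHH]
      calc c * φ i - (Real.sqrt ((r1 : ℝ) + 1))⁻¹ *
            ((Real.sqrt ((r : ℝ) + t))⁻¹ * (a * φ i) + (0 +
              (r1 : ℝ) * ((Real.sqrt ((r1 : ℝ) + 1))⁻¹ * (c * φ i))))
          = c * φ i - ((Real.sqrt ((r1 : ℝ) + 1))⁻¹ * (Real.sqrt ((r : ℝ) + t))⁻¹ * a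
              + ((Real.sqrt ((r1 : ℝ) + 1))⁻¹) ^ 2 * (r1 : ℝ) * c) * φ i := by ring
        _ = c * φ i - ((1 - x) * c) * φ i := by rw [← E3]
        _ = x * (c * φ i) := by ring

end Construct

section Flow

variable {n r t r1 : ℕ} {G : SimpleGraph (Fin n)} [DecidableRel G.Adj]
  {H : Fin n → SimpleGraph (Fin t)}

lemma adjM_symm {V : Type*} [Fintype V] [DecidableEq V] (G' : SimpleGraph V) (u v : V) :
    adjM G' u v = adjM G' v u := by
  by_cases h : G'.Adj u v
  · rw [adjM_pos h, adjM_pos h.symm]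
  · rw [adjM_neg h, adjM_neg fun hc => h hc.symm]

lemma adjM_nonneg {V : Type*} [Fintype V] [DecidableEq V] (G' : SimpleGraph V) (u v : V) :
    0 ≤ adjM G' u v := by
  by_cases h : G'.Adj u v
  · rw [adjM_pos h]; norm_num
  · rw [adjM_neg h]

/-- If `μ = 2` is an eigenvalue of the normalized Laplacian of an `r`-regular graph,
the eigenvector alternates along each edge. -/
lemma alternating (hG : ∀ v, cdeg G v = r) (hr : 1 ≤ r) (φ : Fin n → ℝ)
    (heig : ∀ v, ∑ u, adjM G v u * φ u = -(r : ℝ) * φ v) :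
    ∀ u v, G.Adj u v → φ u + φ v = 0 := by
  have hrpos : (0 : ℝ) < r := by exact_mod_cast hr
  have key : ∑ v, ∑ u, adjM G v u * (φ u + φ v) ^ 2 = 0 := by
    have expand : ∀ v, ∑ u, adjM G v u * (φ u + φ v) ^ 2
        = (∑ u, adjM G v u * φ u ^ 2) + 2 * φ v * (∑ u, adjM G v u * φ u)
          + (r : ℝ) * φ v ^ 2 := by
      intro v
      have e1 : ∀ u, adjM G v u * (φ u + φ v) ^ 2
          = adjM G v u * φ u ^ 2 + 2 * φ v * (adjM G v u * φ u) + adjM G v u * φ v ^ 2 :=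
        fun u => by ring
      simp only [e1, Finset.sum_add_distrib]
      congr 1
      · congr 1
        rw [Finset.mul_sum]
      · rw [← Finset.sum_mul, ← cdeg_sum, hG]
    simp only [expand, heig, Finset.sum_add_distrib]
    have swap : ∑ v, ∑ u, adjM G v u * φ u ^ 2 = ∑ u : Fin n, (r : ℝ) * φ u ^ 2 := by
      rw [Finset.sum_comm]
      refine Finset.sum_congr rfl fun u _ => ?_
      have : ∀ v : Fin n, adjM G v u * φ u ^ 2 = adjM G u v * φ u ^ 2 :=
        fun v => by rw [adjM_symm]
      simp only [this]
      rw [← Finset.sum_mul, ← cdeg_sum, hG]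
    rw [swap]
    rw [← Finset.sum_add_distrib, ← Finset.sum_add_distrib]
    refine Finset.sum_eq_zero fun v _ => ?_
    ring
  intro u v huv
  have nonneg : ∀ z ∈ (Finset.univ : Finset (Fin n)),
      (0 : ℝ) ≤ ∑ w, adjM G z w * (φ w + φ z) ^ 2 := by
    intro z _
    refine Finset.sum_nonneg fun w _ => ?_
    exact mul_nonneg (adjM_nonneg G z w) (sq_nonneg _)
  have inner0 := (Finset.sum_eq_zero_iff_of_nonneg nonneg).mp key v (Finset.mem_univ v)
  have nonneg2 : ∀ w ∈ (Finset.univ : Finset (Fin n)),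
      (0 : ℝ) ≤ adjM G v w * (φ w + φ v) ^ 2 :=
    fun w _ => mul_nonneg (adjM_nonneg G v w) (sq_nonneg _)
  have term0 := (Finset.sum_eq_zero_iff_of_nonneg nonneg2).mp inner0 u (Finset.mem_univ u)
  rw [adjM_pos huv.symm, one_mul] at term0
  have := pow_eq_zero_iff (n := 2) (by norm_num) |>.mp term0
  linarith

/-- Existence of a nonzero "flow" on the edges when the one-sums vanish against
an alternating eigenvector. -/
lemma exists_flow (hn : 0 < n) (hr : 2 ≤ r) (hG : ∀ v, cdeg G v = r)
    (φ : Fin n → ℝ) (hφ0 : φ ≠ 0)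
    (halt : ∀ e : G.edgeSet, ∑ y, inc y (e : Sym2 (Fin n)) * φ y = 0) :
    ∃ h : G.edgeSet → ℝ, h ≠ 0 ∧ ∀ v, ∑ e : G.edgeSet, inc v (e : Sym2 (Fin n)) * h e = 0 := by
  classical
  -- the number of edges is at least n
  have hm : n ≤ Fintype.card G.edgeSet := by
    have hsum := SimpleGraph.sum_degrees_eq_twice_card_edges G
    have hdeg : ∀ v : Fin n, G.degree v = r := fun v => by
      rw [← cdeg_eq_degree, hG]
    rw [Finset.sum_congr rfl (fun v _ => hdeg v), Finset.sum_const, Finset.card_univ,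
      Fintype.card_fin, smul_eq_mul] at hsum
    have hcard : G.edgeFinset.card = Fintype.card G.edgeSet := by
      rw [SimpleGraph.edgeFinset, Set.toFinset_card]
    rw [hcard] at hsum
    nlinarith [hsum, hr, hn]
  -- the incidence map
  set N : Matrix (Fin n) G.edgeSet ℝ := fun v e => inc v (e : Sym2 (Fin n)) with hN
  set L : (G.edgeSet → ℝ) →ₗ[ℝ] (Fin n → ℝ) := N.mulVecLin with hL
  set ℓ : ((Fin n) → ℝ) →ₗ[ℝ] ℝ := ∑ v, φ v • LinearMap.proj v with hℓ
  have hℓ_apply : ∀ ψ : Fin n → ℝ, ℓ ψ = ∑ v, φ v * ψ v := by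
    intro ψ
    rw [hℓ]
    simp [LinearMap.sum_apply, LinearMap.proj_apply]
  have hrange : LinearMap.range L ≤ LinearMap.ker ℓ := by
    rintro ψ ⟨h, rfl⟩
    rw [LinearMap.mem_ker, hℓ_apply]
    have swap : ∑ v, φ v * (N *ᵥ h) v
        = ∑ e : G.edgeSet, (∑ v, inc v (e : Sym2 (Fin n)) * φ v) * h e := by
      simp only [Matrix.mulVec, dotProduct, Finset.mul_sum, Finset.sum_mul]
      rw [Finset.sum_comm]
      refine Finset.sum_congr rfl fun e _ => Finset.sum_congr rfl fun v _ => by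
        rw [hN]
        ring
    rw [hL, Matrix.mulVecLin_apply, swap]
    refine Finset.sum_eq_zero fun e _ => ?_
    rw [halt e, zero_mul]
  have hℓne : ℓ ≠ 0 := by
    intro h0
    apply hφ0
    funext v
    have := congrFun (congrArg DFunLike.coe h0) φ
    rw [hℓ_apply] at this
    simp only [LinearMap.zero_apply] at this
    have hsq : ∑ u, φ u * φ u = 0 := this
    have := (Finset.sum_eq_zero_iff_of_nonneg (fun u _ => mul_self_nonneg (φ u))).mp hsq v
      (Finset.mem_univ v)
    have := mul_self_eq_zero.mp this
    simpa using this
  -- rank computations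
  have hker_ℓ : Module.finrank ℝ (LinearMap.ker ℓ) ≤ n - 1 := by
    have h1 := LinearMap.finrank_range_add_finrank_ker ℓ
    rw [Module.finrank_pi, Fintype.card_fin] at h1
    have h2 : 1 ≤ Module.finrank ℝ (LinearMap.range ℓ) := by
      by_contra hcon
      push_neg at hcon
      interval_cases h : Module.finrank ℝ (LinearMap.range ℓ)
      · exact hℓne (LinearMap.range_eq_bot.mp (Submodule.finrank_eq_zero.mp h))
    omega
  have hrank : Module.finrank ℝ (LinearMap.range L) ≤ n - 1 :=
    le_trans (Submodule.finrank_mono hrange) hker_ℓ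
  have hkerL : LinearMap.ker L ≠ ⊥ := by
    intro hbot
    have h1 := LinearMap.finrank_range_add_finrank_ker L
    rw [Module.finrank_pi, hbot, finrank_bot] at h1
    omega
  obtain ⟨h, hh, hne0⟩ := Submodule.ne_bot_iff _ |>.mp hkerL
  refine ⟨h, hne0, fun v => ?_⟩
  have := congrFun (LinearMap.mem_ker.mp hh) v
  rw [hL, Matrix.mulVecLin_apply] at this
  simpa [Matrix.mulVec, dotProduct, hN] using this

lemma flow_construct (hn : 0 < n) (hr : 2 ≤ r) (hG : ∀ v, cdeg G v = r)
    (φ : Fin n → ℝ) (hφ0 : φ ≠ 0)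
    (halt : ∀ e : G.edgeSet, ∑ y, inc y (e : Sym2 (Fin n)) * φ y = 0) :
    IsEigenvalue (normLap (svc G (fun _ => t) H)) 1 := by
  obtain ⟨h, hne0, hflow⟩ := exists_flow hn hr hG φ hφ0 halt
  set f : (Fin n ⊕ (G.edgeSet ⊕ Σ _ : Fin n, Fin t)) → ℝ :=
    Sum.elim (fun _ => 0) (Sum.elim (fun e => h e) (fun _ => 0)) with hf
  refine ⟨f, ?_, ?_⟩
  · obtain ⟨e0, he0⟩ := Function.ne_iff.mp hne0
    intro hf0
    apply he0
    have := congrFun hf0 (Sum.inr (Sum.inl e0))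
    simpa [hf] using this
  · funext z
    rcases z with v | e | ⟨i, w⟩
    · rw [normLap_mulVec_apply, Fintype.sum_sum_type, Fintype.sum_sum_type,
        ← Finset.univ_sigma_univ, Finset.sum_sigma]
      simp only [hf, Sum.elim_inl, Sum.elim_inr, svc_adjM_inl_inl, svc_adjM_inl_edge,
        svc_adjM_inl_h, mul_zero, zero_mul, Finset.sum_const_zero, Pi.smul_apply,
        smul_eq_mul, svc_cdeg_edge G H]
      have : ∑ e : G.edgeSet,
          inc v (e : Sym2 (Fin n)) * ((Real.sqrt (2 : ℝ))⁻¹ * h e)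
          = (Real.sqrt (2 : ℝ))⁻¹ * ∑ e : G.edgeSet, inc v (e : Sym2 (Fin n)) * h e := by
        rw [Finset.mul_sum]
        exact Finset.sum_congr rfl fun e _ => by ring
      rw [this, hflow v]
      ring
    · rw [normLap_mulVec_apply, Fintype.sum_sum_type, Fintype.sum_sum_type,
        ← Finset.univ_sigma_univ, Finset.sum_sigma]
      simp only [hf, Sum.elim_inl, Sum.elim_inr, svc_adjM_edge_inl, svc_adjM_edge_edge,
        svc_adjM_edge_h, mul_zero, zero_mul, Finset.sum_const_zero, Pi.smul_apply,
        smul_eq_mul]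
      ring
    · rw [normLap_mulVec_apply, Fintype.sum_sum_type, Fintype.sum_sum_type,
        ← Finset.univ_sigma_univ, Finset.sum_sigma]
      simp only [hf, Sum.elim_inl, Sum.elim_inr, svc_adjM_h_inl, svc_adjM_h_edge,
        svc_adjM_h_h, mul_zero, zero_mul, Finset.sum_const_zero, Pi.smul_apply,
        smul_eq_mul]
      ring

end Flow

theorem stmt4 {n r t r1 : ℕ} (hr : 2 ≤ r) (ht : 1 ≤ t)
    (G : SimpleGraph (Fin n)) [DecidableRel G.Adj]
    (hconn : G.Connected) (hG : ∀ v, cdeg G v = r)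
    (H : Fin n → SimpleGraph (Fin t)) (hH : ∀ i w, cdeg (H i) w = r1)
    (μ : ℝ) (hμ : IsEigenvalue (normLap G) μ) (x : ℝ)
    (hx : 2 * ((r : ℝ) + t + r * r1 + r1 * t) * x ^ 3
        - 2 * (2 * (r : ℝ) * r1 + 2 * r1 * t + 3 * r + 3 * t) * x ^ 2
        + (2 * (t : ℝ) * r1 + 4 * r + 4 * t + r * r1 * μ + r * μ) * x
        - (r : ℝ) * μ = 0) :
    IsEigenvalue (normLap (svc G (fun _ => t) H)) x := by
  classical
  obtain ⟨φ, hφ0, hφeig⟩ := hμ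
  have hrR : (2 : ℝ) ≤ (r : ℝ) := by exact_mod_cast hr
  have htR : (1 : ℝ) ≤ (t : ℝ) := by exact_mod_cast ht
  have hr0 : (0 : ℝ) < (r : ℝ) := by linarith
  have hrt0 : (0 : ℝ) < (r : ℝ) + t := by linarith
  have hr10 : (0 : ℝ) < (r1 : ℝ) + 1 := by positivity
  have hs1ne : Real.sqrt ((r : ℝ) + t) ≠ 0 := by positivity
  have hs2ne : Real.sqrt (2 : ℝ) ≠ 0 := by positivity
  have hs3ne : Real.sqrt ((r1 : ℝ) + 1) ≠ 0 := by positivity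
  have hs1sq : Real.sqrt ((r : ℝ) + t) ^ 2 = (r : ℝ) + t := Real.sq_sqrt hrt0.le
  have hs2sq : Real.sqrt (2 : ℝ) ^ 2 = 2 := Real.sq_sqrt (by norm_num)
  have hs3sq : Real.sqrt ((r1 : ℝ) + 1) ^ 2 = (r1 : ℝ) + 1 := Real.sq_sqrt hr10.le
  have hi1 : ((Real.sqrt ((r : ℝ) + t))⁻¹) ^ 2 * ((r : ℝ) + t) = 1 := by
    rw [inv_pow, hs1sq]
    field_simp
  have hi2 : ((Real.sqrt (2 : ℝ))⁻¹) ^ 2 * 2 = 1 := by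
    rw [inv_pow, hs2sq]
    norm_num
  have hi3 : ((Real.sqrt ((r1 : ℝ) + 1))⁻¹) ^ 2 * ((r1 : ℝ) + 1) = 1 := by
    rw [inv_pow, hs3sq]
    field_simp
  -- the eigenvector equation for `G`
  have heig : ∀ v, ∑ u, adjM G v u * φ u = (r : ℝ) * (1 - μ) * φ v := by
    intro v
    have hsrne : Real.sqrt (r : ℝ) ≠ 0 := by positivity
    have hii : ((Real.sqrt (r : ℝ))⁻¹) ^ 2 * (r : ℝ) = 1 := by
      rw [inv_pow, Real.sq_sqrt hr0.le]
      field_simp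
    have h := congrFun hφeig v
    rw [normLap_mulVec_apply] at h
    simp only [hG, Pi.smul_apply, smul_eq_mul] at h
    have hpull : ∑ u, adjM G v u * ((Real.sqrt (r : ℝ))⁻¹ * φ u)
        = (Real.sqrt (r : ℝ))⁻¹ * ∑ u, adjM G v u * φ u := by
      rw [Finset.mul_sum]
      exact Finset.sum_congr rfl fun u _ => by ring
    rw [hpull] at h
    linear_combination (-(r : ℝ)) * h + (-(∑ u, adjM G v u * φ u)) * hii
  have hn : 0 < n := by
    rcases Nat.eq_zero_or_pos n with h0 | h0
    · subst h0
      exact absurd (funext fun v : Fin 0 => v.elim0) hφ0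
    · exact h0
  by_cases hx1 : x = 1
  · subst hx1
    by_cases hμ2 : μ = 2
    · -- the bipartite case: use a flow supported on the subdivision vertices
      subst hμ2
      have heig' : ∀ v, ∑ u, adjM G v u * φ u = -(r : ℝ) * φ v := by
        intro v
        rw [heig v]
        ring
      have halt := alternating hG (by omega) φ heig'
      have halt' : ∀ e : G.edgeSet, ∑ y, inc y (e : Sym2 (Fin n)) * φ y = 0 := by
        rintro ⟨e, he⟩
        induction e using Sym2.ind with
        | _ u v =>
          have hadj : G.Adj u v := G.mem_edgeSet.mp he
          rw [sum_inc_sym2 hadj.ne φ]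
          exact halt u v hadj
      exact flow_construct hn hr hG φ hφ0 halt'
    · -- here necessarily r1 = 0
      have hμ2' : (2 : ℝ) - μ ≠ 0 := fun hc => hμ2 (by linarith)
      have hr1 : (r1 : ℝ) = 0 := by
        have h0 : (r : ℝ) * r1 * (μ - 2) = 0 := by linear_combination hx
        rcases mul_eq_zero.mp h0 with h1 | h1
        · rcases mul_eq_zero.mp h1 with h2 | h2
          · exact absurd h2 (by positivity)
          · exact h2
        · exact absurd h1 (fun hc => hμ2' (by linarith))
      refine main_construct ht hG hH φ hφ0 μ 1 heig 0
        (-((Real.sqrt ((r1 : ℝ) + 1))⁻¹ * t) / ((Real.sqrt 2)⁻¹ * ((r : ℝ) * (2 - μ)))) 1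
        ?_ ?_ ?_ (Or.inr one_ne_zero)
      · have hd : (Real.sqrt 2)⁻¹ * ((r : ℝ) * (2 - μ)) ≠ 0 := by
          refine mul_ne_zero (inv_ne_zero hs2ne) (mul_ne_zero (ne_of_gt hr0) hμ2')
        field_simp
        ring
      · ring
      · rw [hr1]
        ring
  · -- the generic case
    have hkx : ((r1 : ℝ) + 1) * x ≠ 1 := by
      intro hxk
      by_cases h0 : (r1 : ℝ) = 0
      · apply hx1
        rw [h0] at hxk
        linarith
      · have hr1ge : (1 : ℝ) ≤ (r1 : ℝ) := by
          have : (1 : ℕ) ≤ r1 := by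
            rcases Nat.eq_zero_or_pos r1 with hh | hh
            · exact absurd (by exact_mod_cast hh : (r1 : ℝ) = 0) h0
            · exact hh
          exact_mod_cast this
        have hne : ((r1 : ℝ) + 1) ≠ 0 := by positivity
        have hxv : x = 1 / ((r1 : ℝ) + 1) := by
          rw [eq_div_iff hne]
          linear_combination hxk
        rw [hxv] at hx
        field_simp at hx
        have key : 2 * (t : ℝ) * r1 * ((r1 : ℝ) + 1) ^ 5 = 0 := by linear_combination ((r1 : ℝ) + 1) ^ 3 * hx
        have ht0 : (0 : ℝ) < t := by linarith
        have hr1p : (0 : ℝ) < (r1 : ℝ) := by linarith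
        have pos : 0 < 2 * (t : ℝ) * r1 * ((r1 : ℝ) + 1) ^ 5 := by positivity
        linarith [key, pos]
    refine main_construct ht hG hH φ hφ0 μ x heig
      ((1 - x) * (1 - ((r1 : ℝ) + 1) * x))
      ((Real.sqrt ((r : ℝ) + t))⁻¹ * (Real.sqrt 2)⁻¹ * (1 - ((r1 : ℝ) + 1) * x))
      ((Real.sqrt ((r : ℝ) + t))⁻¹ * (Real.sqrt ((r1 : ℝ) + 1))⁻¹ * (((r1 : ℝ) + 1) * (1 - x)))
      ?_ ?_ ?_ (Or.inl ?_)
    · -- E1 via the certificate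
      linear_combination
        (-(1 - x) ^ 2 * (1 - ((r1 : ℝ) + 1) * x) * (2 * ((Real.sqrt 2)⁻¹) ^ 2)) * hi1
        + (((Real.sqrt ((r : ℝ) + t))⁻¹) ^ 2 * (t : ℝ) * (1 - x)
            - (1 - x) ^ 2 * (1 - ((r1 : ℝ) + 1) * x)) * hi2
        + (-(((Real.sqrt ((r : ℝ) + t))⁻¹) ^ 2 * (t : ℝ) * (1 - x))) * hi3
        + (-(((Real.sqrt ((r : ℝ) + t))⁻¹) ^ 2 * ((Real.sqrt 2)⁻¹) ^ 2)) * hx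
    · ring
    · linear_combination
        (-((Real.sqrt ((r : ℝ) + t))⁻¹ * (Real.sqrt ((r1 : ℝ) + 1))⁻¹ * (1 - x) * (r1 : ℝ))) * hi3
    · exact mul_ne_zero (fun hc => hx1 (by linarith))
        (fun hc => hkx (by linarith))
end

section
/- Let G_1 and G_2 be 𝓛-cospectral connected r-regular graphs (r ≥ 2) on n vertices, and for each i = 1,…,n let H_i and H_i' be 𝓛-cospectral r_1-regular graphs on t ≥ 1 vertices. Then the generalized subdivision-vertex coronas S(G_1)⊙∧_{i=1}^n H_i and S(G_2)⊙∧_{i=1}^n H_i' are 𝓛-cospectral. -/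
open Matrix Polynomial

noncomputable section SVCAux
open Finset

abbrev KK : Type := FractionRing (Polynomial ℝ)

def pphi : Polynomial ℝ →+* KK := algebraMap _ _
def rphi : ℝ →+* KK := pphi.comp (Polynomial.C : ℝ →+* Polynomial ℝ)

lemma pphi_inj : Function.Injective pphi := IsFractionRing.injective _ _

def yKK : KK := pphi X - 1

lemma yKK_eq (c : ℝ) : yKK + rphi c = pphi (X - Polynomial.C (1 - c)) := by
  simp [yKK, rphi, map_sub, _root_.map_one]
  ring

lemma yKK_add_ne (c : ℝ) : yKK + rphi c ≠ 0 := by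
  rw [yKK_eq]
  intro h
  exact Polynomial.X_sub_C_ne_zero (1 - c) (pphi_inj (by rwa [map_zero]))

lemma yKK_ne : yKK ≠ 0 := by
  have := yKK_add_ne 0
  simpa using this

lemma det_pphi_charpoly {ι : Type*} [Fintype ι] [DecidableEq ι] (P : Matrix ι ι ℝ) :
    pphi P.charpoly = ((pphi X) • (1 : Matrix ι ι KK) - P.map rphi).det := by
  rw [Matrix.charpoly, RingHom.map_det]
  congr 1
  ext i j
  by_cases h : i = j
  · subst h
    simp [charmatrix_apply_eq, rphi, Matrix.map_apply, Matrix.sub_apply, Matrix.smul_apply,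
      Matrix.one_apply, map_sub]
  · simp [Matrix.charmatrix_apply_ne _ _ _ h, h, rphi, Matrix.map_apply, Matrix.sub_apply,
      Matrix.smul_apply, Matrix.one_apply]

lemma eval2_charpoly {ι : Type*} [Fintype ι] [DecidableEq ι] (P : Matrix ι ι ℝ) (u : KK) :
    P.charpoly.eval₂ rphi u = (u • (1 : Matrix ι ι KK) - P.map rphi).det := by
  rw [Matrix.charpoly, ← Polynomial.coe_eval₂RingHom, RingHom.map_det]
  congr 1
  ext i j
  by_cases h : i = j
  · subst h
    simp [charmatrix_apply_eq, Matrix.map_apply, Matrix.sub_apply, Matrix.smul_apply,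
      Matrix.one_apply]
  · simp [Matrix.charmatrix_apply_ne _ _ _ h, h, Matrix.map_apply, Matrix.sub_apply,
      Matrix.smul_apply, Matrix.one_apply]

lemma det_aff {ι : Type*} [Fintype ι] [DecidableEq ι] {P Q : Matrix ι ι ℝ}
    (h : P.charpoly = Q.charpoly) (α β : KK) :
    (α • (1 : Matrix ι ι KK) + β • P.map rphi).det
      = (α • (1 : Matrix ι ι KK) + β • Q.map rphi).det := by
  by_cases hβ : β = 0
  · simp [hβ]
  · have key : ∀ R : Matrix ι ι ℝ, α • (1 : Matrix ι ι KK) + β • R.map rphi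
        = (-β) • ((-(α * β⁻¹)) • (1 : Matrix ι ι KK) - R.map rphi) := by
      intro R
      have hc : (-β) * (-(α * β⁻¹)) = α := by field_simp
      rw [smul_sub, smul_smul, hc, neg_smul, sub_neg_eq_add]
    rw [key P, key Q, Matrix.det_smul, Matrix.det_smul, ← eval2_charpoly, ← eval2_charpoly, h]

end SVCAux


noncomputable section SVCCount
open Finset

variable {V : Type*} [Fintype V] [DecidableEq V]

lemma cdeg_eq (G : SimpleGraph V) [inst : DecidableRel G.Adj] (v : V) :
    cdeg G v = G.degree v := by
  unfold cdeg
  congr!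

lemma adjM_apply (G : SimpleGraph V) [inst : DecidableRel G.Adj] (u v : V) :
    adjM G u v = if G.Adj u v then 1 else 0 := by
  unfold adjM
  rw [SimpleGraph.adjMatrix_apply]
  congr!

lemma degree_eq_sum (G : SimpleGraph V) [DecidableRel G.Adj] (v : V) :
    G.degree v = ∑ u, if G.Adj v u then 1 else 0 := by
  rw [SimpleGraph.degree, SimpleGraph.neighborFinset_eq_filter, Finset.card_filter]

lemma sum_adj_real (G : SimpleGraph V) [DecidableRel G.Adj] (v : V) :
    ∑ u, (if G.Adj v u then (1:ℝ) else 0) = (G.degree v : ℝ) := by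
  rw [degree_eq_sum]
  push_cast
  rfl

/-- (S1) sum over edges of incidence indicator equals degree -/
lemma sum_edge_mem (G : SimpleGraph V) [DecidableRel G.Adj] (v : V) :
    ∑ e : G.edgeSet, (if v ∈ (e : Sym2 V) then (1:ℝ) else 0) = (G.degree v : ℝ) := by
  classical
  rw [← Finset.sum_subtype G.edgeFinset (fun x => SimpleGraph.mem_edgeFinset)
    (fun e => if v ∈ e then (1:ℝ) else 0)]
  trans ((∑ a ∈ G.edgeFinset, if v ∈ a then (1:ℕ) else 0 : ℕ) : ℝ)
  · push_cast
    rfl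
  · rw [← Finset.card_filter, ← SimpleGraph.incidenceFinset_eq_filter,
      SimpleGraph.card_incidenceFinset_eq_degree]

/-- (S2) sum over edges of product of incidence indicators, distinct vertices -/
lemma sum_edge_mem_mem (G : SimpleGraph V) [DecidableRel G.Adj] {u v : V} (huv : u ≠ v) :
    ∑ e : G.edgeSet, (if u ∈ (e : Sym2 V) then (1:ℝ) else 0) * (if v ∈ (e : Sym2 V) then 1 else 0)
      = if G.Adj u v then 1 else 0 := by
  classical
  rw [← Finset.sum_subtype G.edgeFinset (fun x => SimpleGraph.mem_edgeFinset)
    (fun e => (if u ∈ e then (1:ℝ) else 0) * (if v ∈ e then 1 else 0))]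
  have h1 : ∀ e ∈ G.edgeFinset,
      (if u ∈ e then (1:ℝ) else 0) * (if v ∈ e then 1 else 0)
        = if e = s(u, v) then 1 else 0 := by
    intro e _
    rw [ite_zero_mul_ite_zero]
    rw [one_mul]
    congr 1
    simp only [eq_iff_iff]
    exact Sym2.mem_and_mem_iff huv
  rw [Finset.sum_congr rfl h1, Finset.sum_ite_eq' G.edgeFinset (s(u,v)) (fun _ => (1:ℝ))]
  congr 1
  simp [SimpleGraph.mem_edgeFinset]

end SVCCount

noncomputable section SVCAdj
open Finset

variable {n t : ℕ} (G : SimpleGraph (Fin n)) (H : Fin n → SimpleGraph (Fin t))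

@[simp] lemma svc_adj_vv (u v : Fin n) :
    ¬ (svc G (fun _ => t) H).Adj (Sum.inl u) (Sum.inl v) := by
  simp [svc, SimpleGraph.fromRel_adj]

@[simp] lemma svc_adj_ve (v : Fin n) (e : G.edgeSet) :
    (svc G (fun _ => t) H).Adj (Sum.inl v) (Sum.inr (Sum.inl e)) ↔ v ∈ (e : Sym2 (Fin n)) := by
  simp [svc, SimpleGraph.fromRel_adj]

@[simp] lemma svc_adj_ev (v : Fin n) (e : G.edgeSet) :
    (svc G (fun _ => t) H).Adj (Sum.inr (Sum.inl e)) (Sum.inl v) ↔ v ∈ (e : Sym2 (Fin n)) := by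
  rw [SimpleGraph.adj_comm]
  simp [svc, SimpleGraph.fromRel_adj]

@[simp] lemma svc_adj_vw (v i : Fin n) (w : Fin t) :
    (svc G (fun _ => t) H).Adj (Sum.inl v) (Sum.inr (Sum.inr ⟨i, w⟩)) ↔ v = i := by
  simp [svc, SimpleGraph.fromRel_adj]

@[simp] lemma svc_adj_wv (v i : Fin n) (w : Fin t) :
    (svc G (fun _ => t) H).Adj (Sum.inr (Sum.inr ⟨i, w⟩)) (Sum.inl v) ↔ v = i := by
  rw [SimpleGraph.adj_comm]
  simp [svc, SimpleGraph.fromRel_adj]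

@[simp] lemma svc_adj_ee (e e' : G.edgeSet) :
    ¬ (svc G (fun _ => t) H).Adj (Sum.inr (Sum.inl e)) (Sum.inr (Sum.inl e')) := by
  simp [svc, SimpleGraph.fromRel_adj]

@[simp] lemma svc_adj_ew (e : G.edgeSet) (i : Fin n) (w : Fin t) :
    ¬ (svc G (fun _ => t) H).Adj (Sum.inr (Sum.inl e)) (Sum.inr (Sum.inr ⟨i, w⟩)) := by
  simp [svc, SimpleGraph.fromRel_adj]

@[simp] lemma svc_adj_we (e : G.edgeSet) (i : Fin n) (w : Fin t) :
    ¬ (svc G (fun _ => t) H).Adj (Sum.inr (Sum.inr ⟨i, w⟩)) (Sum.inr (Sum.inl e)) := by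
  simp [svc, SimpleGraph.fromRel_adj]

@[simp] lemma svc_adj_ww_same (i : Fin n) (w w' : Fin t) :
    (svc G (fun _ => t) H).Adj (Sum.inr (Sum.inr ⟨i, w⟩)) (Sum.inr (Sum.inr ⟨i, w'⟩))
      ↔ (H i).Adj w w' := by
  unfold svc
  rw [SimpleGraph.fromRel_adj]
  constructor
  · rintro ⟨-, (⟨h, ha⟩ | ⟨h, ha⟩)⟩
    · exact ha
    · exact ha.symm
  · intro ha
    refine ⟨?_, Or.inl ⟨rfl, ha⟩⟩
    simp [ha.ne]

@[simp] lemma svc_adj_ww_ne {i j : Fin n} (hij : i ≠ j) (w w' : Fin t) :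
    ¬ (svc G (fun _ => t) H).Adj (Sum.inr (Sum.inr ⟨i, w⟩)) (Sum.inr (Sum.inr ⟨j, w'⟩)) := by
  unfold svc
  rw [SimpleGraph.fromRel_adj]
  rintro ⟨-, (⟨h, -⟩ | ⟨h, -⟩)⟩
  · exact hij h
  · exact hij h.symm

end SVCAdj

noncomputable section SVCDeg
open Finset

lemma sum_mem_sym2 {V : Type*} [Fintype V] [DecidableEq V] {e : Sym2 V} (he : ¬ e.IsDiag) :
    ∑ v, (if v ∈ e then (1:ℝ) else 0) = 2 := by
  induction e with
  | _ u v =>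
    have hne : u ≠ v := by simpa [Sym2.mk_isDiag_iff] using he
    have h1 : ∀ x : V, (if x ∈ s(u,v) then (1:ℝ) else 0)
        = (if x = u then (1:ℝ) else 0) + (if x = v then 1 else 0) := by
      intro x
      by_cases hx : x = u
      · subst hx
        simp [Sym2.mem_iff, hne]
      · by_cases hy : x = v
        · subst hy
          simp [Sym2.mem_iff, hx]
        · simp [Sym2.mem_iff, hx, hy]
    rw [Finset.sum_congr rfl (fun x _ => h1 x), Finset.sum_add_distrib,
      Finset.sum_ite_eq' univ u (fun _ => (1:ℝ)), Finset.sum_ite_eq' univ v (fun _ => (1:ℝ))]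
    norm_num

variable {n r t r1 : ℕ} (G : SimpleGraph (Fin n)) [DecidableRel G.Adj]
  (H : Fin n → SimpleGraph (Fin t))

lemma svc_deg_v (hreg : ∀ v, cdeg G v = r) (v : Fin n) :
    (cdeg (svc G (fun _ => t) H) (Sum.inl v) : ℝ) = (r : ℝ) + t := by
  classical
  letI : DecidableRel (svc G (fun _ => t) H).Adj := Classical.decRel _
  rw [cdeg_eq, degree_eq_sum]
  push_cast
  rw [Fintype.sum_sum_type, Fintype.sum_sum_type]
  have h0 : ∑ u : Fin n,
      (if (svc G (fun _ => t) H).Adj (Sum.inl v) (Sum.inl u) then (1:ℝ) else 0) = 0 := by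
    simp
  have h1 : ∑ e : G.edgeSet,
      (if (svc G (fun _ => t) H).Adj (Sum.inl v) (Sum.inr (Sum.inl e)) then (1:ℝ) else 0)
        = (r : ℝ) := by
    simp only [svc_adj_ve]
    rw [sum_edge_mem]
    rw [← cdeg_eq, hreg]
  have h2 : ∑ x : (Σ _ : Fin n, Fin t),
      (if (svc G (fun _ => t) H).Adj (Sum.inl v) (Sum.inr (Sum.inr x)) then (1:ℝ) else 0)
        = (t : ℝ) := by
    rw [← Finset.univ_sigma_univ, Finset.sum_sigma]
    have : ∀ i : Fin n, ∑ _w : Fin t,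
        (if (svc G (fun _ => t) H).Adj (Sum.inl v) (Sum.inr (Sum.inr ⟨i, _w⟩)) then (1:ℝ) else 0)
          = if i = v then (t : ℝ) else 0 := by
      intro i
      by_cases hi : i = v
      · subst hi
        simp
      · simp [svc_adj_vw, Ne.symm hi, hi]
    rw [Finset.sum_congr rfl (fun i _ => this i), Finset.sum_ite_eq' univ v fun _ => (t:ℝ)]
    simp
  rw [h0, h1, h2]
  ring

lemma svc_deg_e (e : G.edgeSet) :
    (cdeg (svc G (fun _ => t) H) (Sum.inr (Sum.inl e)) : ℝ) = 2 := by
  classical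
  letI : DecidableRel (svc G (fun _ => t) H).Adj := Classical.decRel _
  rw [cdeg_eq, degree_eq_sum]
  push_cast
  rw [Fintype.sum_sum_type, Fintype.sum_sum_type]
  have h0 : ∑ v : Fin n,
      (if (svc G (fun _ => t) H).Adj (Sum.inr (Sum.inl e)) (Sum.inl v) then (1:ℝ) else 0)
        = 2 := by
    simp only [svc_adj_ev]
    exact sum_mem_sym2 (SimpleGraph.not_isDiag_of_mem_edgeSet G e.2)
  have h1 : ∑ e' : G.edgeSet,
      (if (svc G (fun _ => t) H).Adj (Sum.inr (Sum.inl e)) (Sum.inr (Sum.inl e')) then (1:ℝ) else 0)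
        = 0 := by simp
  have h2 : ∑ x : (Σ _ : Fin n, Fin t),
      (if (svc G (fun _ => t) H).Adj (Sum.inr (Sum.inl e)) (Sum.inr (Sum.inr x)) then (1:ℝ) else 0)
        = 0 := by
    rw [← Finset.univ_sigma_univ, Finset.sum_sigma]
    simp
  rw [h0, h1, h2]
  ring

lemma svc_deg_w (hH : ∀ i w, cdeg (H i) w = r1) (i : Fin n) (w : Fin t) :
    (cdeg (svc G (fun _ => t) H) (Sum.inr (Sum.inr ⟨i, w⟩)) : ℝ) = (r1 : ℝ) + 1 := by
  classical
  letI : DecidableRel (svc G (fun _ => t) H).Adj := Classical.decRel _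
  rw [cdeg_eq, degree_eq_sum]
  push_cast
  rw [Fintype.sum_sum_type, Fintype.sum_sum_type]
  have h0 : ∑ v : Fin n,
      (if (svc G (fun _ => t) H).Adj (Sum.inr (Sum.inr ⟨i, w⟩)) (Sum.inl v) then (1:ℝ) else 0)
        = 1 := by
    simp only [svc_adj_wv]
    rw [Finset.sum_ite_eq' univ i fun _ => (1:ℝ)]
    simp
  have h1 : ∑ e : G.edgeSet,
      (if (svc G (fun _ => t) H).Adj (Sum.inr (Sum.inr ⟨i, w⟩)) (Sum.inr (Sum.inl e)) then (1:ℝ)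
        else 0) = 0 := by simp
  have h2 : ∑ x : (Σ _ : Fin n, Fin t),
      (if (svc G (fun _ => t) H).Adj (Sum.inr (Sum.inr ⟨i, w⟩)) (Sum.inr (Sum.inr x)) then (1:ℝ)
        else 0) = (r1 : ℝ) := by
    rw [← Finset.univ_sigma_univ, Finset.sum_sigma]
    rw [Finset.sum_eq_single_of_mem i (Finset.mem_univ i)]
    · letI : DecidableRel (H i).Adj := Classical.decRel _
      simp only [svc_adj_ww_same]
      rw [sum_adj_real, ← cdeg_eq, hH]
    · intro j _ hj
      simp [svc_adj_ww_ne _ _ (Ne.symm hj)]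
  rw [h0, h1, h2]
  ring

end SVCDeg

noncomputable section SVCBlocks
open Finset

def aRc (r t : ℕ) : ℝ := (Real.sqrt ((r:ℝ)+t))⁻¹ * (Real.sqrt 2)⁻¹
def bRc (r t r1 : ℕ) : ℝ := (Real.sqrt ((r:ℝ)+t))⁻¹ * (Real.sqrt ((r1:ℝ)+1))⁻¹
def cRc (r1 : ℕ) : ℝ := ((r1:ℝ)+1)⁻¹

variable {n r t r1 : ℕ} (G : SimpleGraph (Fin n)) [DecidableRel G.Adj]
  (H : Fin n → SimpleGraph (Fin t))

def B0 (G : SimpleGraph (Fin n)) [DecidableRel G.Adj] : Matrix (Fin n) G.edgeSet ℝ :=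
  Matrix.of fun v e => if v ∈ (e : Sym2 (Fin n)) then 1 else 0

def C0 (n t : ℕ) : Matrix (Fin n) (Σ _ : Fin n, Fin t) ℝ :=
  Matrix.of fun v x => if v = x.1 then 1 else 0

def AW (H : Fin n → SimpleGraph (Fin t)) : Matrix (Σ _ : Fin n, Fin t) (Σ _ : Fin n, Fin t) ℝ :=
  Matrix.blockDiagonal' (fun i => adjM (H i))

lemma sum_adjM_row {V : Type*} [Fintype V] [DecidableEq V] (G' : SimpleGraph V) (v : V) :
    ∑ u, adjM G' v u = (cdeg G' v : ℝ) := by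
  classical
  letI : DecidableRel G'.Adj := Classical.decRel _
  rw [cdeg_eq]
  rw [← sum_adj_real G' v]
  refine Finset.sum_congr rfl fun u _ => ?_
  rw [adjM_apply]

lemma hBB (hreg : ∀ v, cdeg G v = r) : B0 G * (B0 G)ᵀ = adjM G + (r:ℝ) • 1 := by
  classical
  ext u v
  rw [Matrix.mul_apply]
  simp only [Matrix.transpose_apply, B0, Matrix.of_apply]
  by_cases huv : u = v
  · subst huv
    have h1 : ∀ e : G.edgeSet, (if u ∈ (e : Sym2 (Fin n)) then (1:ℝ) else 0)
        * (if u ∈ (e : Sym2 (Fin n)) then (1:ℝ) else 0)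
        = if u ∈ (e : Sym2 (Fin n)) then (1:ℝ) else 0 := by
      intro e
      split_ifs <;> norm_num
    rw [Finset.sum_congr rfl fun e _ => h1 e, sum_edge_mem, ← cdeg_eq, hreg]
    rw [Matrix.add_apply, Matrix.smul_apply, Matrix.one_apply_eq, adjM_apply]
    simp
  · rw [sum_edge_mem_mem G huv]
    rw [Matrix.add_apply, Matrix.smul_apply, Matrix.one_apply_ne huv, adjM_apply]
    simp

lemma hCC : C0 n t * (C0 n t)ᵀ = (t:ℝ) • 1 := by
  classical
  ext u v
  rw [Matrix.mul_apply]
  simp only [Matrix.transpose_apply, C0, Matrix.of_apply]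
  rw [← Finset.univ_sigma_univ, Finset.sum_sigma]
  by_cases huv : u = v
  · subst huv
    have h1 : ∀ i : Fin n, (∑ _w : Fin t,
        (if u = i then (1:ℝ) else 0) * (if u = i then (1:ℝ) else 0))
          = if i = u then (t:ℝ) else 0 := by
      intro i
      by_cases hi : u = i
      · subst hi
        simp
      · simp [hi, Ne.symm hi]
    rw [Finset.sum_congr rfl fun i _ => h1 i, Finset.sum_ite_eq' univ u fun _ => (t:ℝ)]
    simp [Matrix.smul_apply, Matrix.one_apply_eq]
  · have h1 : ∀ i : Fin n, (∑ _w : Fin t,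
        (if u = i then (1:ℝ) else 0) * (if v = i then (1:ℝ) else 0)) = 0 := by
      intro i
      by_cases hi : u = i
      · subst hi
        simp [Ne.symm huv]
      · simp [hi]
    rw [Finset.sum_congr rfl fun i _ => h1 i]
    simp [Matrix.smul_apply, Matrix.one_apply_ne huv, huv]

lemma hAC (hH : ∀ i w, cdeg (H i) w = r1) : AW H * (C0 n t)ᵀ = (r1:ℝ) • (C0 n t)ᵀ := by
  classical
  ext x v
  obtain ⟨i, w⟩ := x
  rw [Matrix.mul_apply]
  simp only [Matrix.transpose_apply, C0, AW, Matrix.of_apply]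
  rw [← Finset.univ_sigma_univ, Finset.sum_sigma]
  rw [Finset.sum_eq_single_of_mem i (Finset.mem_univ i)]
  · by_cases hv : v = i
    · subst hv
      simp only [Matrix.blockDiagonal'_apply_eq, if_true, mul_one]
      rw [sum_adjM_row, hH]
      simp [Matrix.smul_apply]
    · simp [hv, Matrix.smul_apply]
  · intro j _ hj
    have : ∀ w' : Fin t, Matrix.blockDiagonal' (fun i => adjM (H i)) ⟨i, w⟩ ⟨j, w'⟩ = 0 :=
      fun w' => Matrix.blockDiagonal'_apply_ne _ _ _ (Ne.symm hj)
    simp [this]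

lemma regular_adjM (hr : 0 < r) (hreg : ∀ v, cdeg G v = r) :
    adjM G = (r:ℝ) • 1 - (r:ℝ) • normLap G := by
  have hrr : (r:ℝ) ≠ 0 := by positivity
  unfold normLap
  ext i j
  simp only [Matrix.sub_apply, Matrix.smul_apply, smul_eq_mul]
  rw [Matrix.mul_diagonal, Matrix.diagonal_mul]
  simp only [hreg, Matrix.one_apply]
  have h2 : Real.sqrt ((r:ℕ):ℝ) * Real.sqrt ((r:ℕ):ℝ) = ((r:ℕ):ℝ) :=
    Real.mul_self_sqrt (by positivity)
  have hs : (Real.sqrt ((r:ℕ):ℝ))⁻¹ * adjM G i j * (Real.sqrt ((r:ℕ):ℝ))⁻¹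
      = adjM G i j * ((r:ℝ))⁻¹ := by
    rw [show ((r:ℝ))⁻¹ = (Real.sqrt ((r:ℕ):ℝ) * Real.sqrt ((r:ℕ):ℝ))⁻¹ by rw [h2]]
    ring
  rw [hs]
  split_ifs with h
  · have h0 : adjM G i j = 0 := by
      classical
      subst h
      rw [adjM_apply]
      simp
    rw [h0]
    ring
  · field_simp
    ring

end SVCBlocks

noncomputable section SVCStruct
open Finset

variable {n r t r1 : ℕ} (G : SimpleGraph (Fin n)) [DecidableRel G.Adj]
  (H : Fin n → SimpleGraph (Fin t))

lemma svc_normLap (hreg : ∀ v, cdeg G v = r) (hH : ∀ i w, cdeg (H i) w = r1) :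
    normLap (svc G (fun _ => t) H) =
      1 - Matrix.fromBlocks 0
        (Matrix.fromCols (aRc r t • B0 G) (bRc r t r1 • C0 n t))
        (Matrix.fromRows (aRc r t • (B0 G)ᵀ) (bRc r t r1 • (C0 n t)ᵀ))
        (Matrix.fromBlocks 0 0 0 (cRc r1 • AW H)) := by
  classical
  unfold normLap
  congr 1
  ext x y
  rw [Matrix.mul_diagonal, Matrix.diagonal_mul, adjM_apply]
  rcases x with v | e | ⟨i, w⟩ <;> rcases y with v' | e' | ⟨j, w'⟩
  · simp
  · rw [svc_deg_v G H hreg, svc_deg_e G H]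
    simp only [svc_adj_ve, Matrix.fromBlocks_apply₁₂, Matrix.fromCols_apply_inl,
      Matrix.smul_apply, B0, Matrix.of_apply, smul_eq_mul, aRc]
    split_ifs <;> ring
  · rw [svc_deg_v G H hreg, svc_deg_w G H hH]
    simp only [svc_adj_vw, Matrix.fromBlocks_apply₁₂, Matrix.fromCols_apply_inr,
      Matrix.smul_apply, C0, Matrix.of_apply, smul_eq_mul, bRc]
    split_ifs <;> ring
  · rw [svc_deg_e G H, svc_deg_v G H hreg]
    simp only [svc_adj_ev, Matrix.fromBlocks_apply₂₁, Matrix.fromRows_apply_inl,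
      Matrix.smul_apply, Matrix.transpose_apply, B0, Matrix.of_apply, smul_eq_mul, aRc]
    split_ifs <;> ring
  · simp
  · simp
  · rw [svc_deg_w G H hH, svc_deg_v G H hreg]
    simp only [svc_adj_wv, Matrix.fromBlocks_apply₂₁, Matrix.fromRows_apply_inr,
      Matrix.smul_apply, Matrix.transpose_apply, C0, Matrix.of_apply, smul_eq_mul, bRc]
    split_ifs <;> ring
  · simp
  · rw [svc_deg_w G H hH, svc_deg_w G H hH]
    by_cases hij : i = j
    · subst hij
      simp only [svc_adj_ww_same, Matrix.fromBlocks_apply₂₂, Matrix.smul_apply,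
        AW, Matrix.blockDiagonal'_apply_eq, smul_eq_mul, cRc]
      letI : DecidableRel (H i).Adj := Classical.decRel _
      rw [adjM_apply]
      have h2 : Real.sqrt ((r1:ℝ)+1) * Real.sqrt ((r1:ℝ)+1) = ((r1:ℝ)+1) :=
        Real.mul_self_sqrt (by positivity)
      split_ifs
      · rw [show ((r1:ℝ)+1)⁻¹ = (Real.sqrt ((r1:ℝ)+1) * Real.sqrt ((r1:ℝ)+1))⁻¹ by rw [h2]]
        ring
      · ring
    · have h0 : AW H ⟨i, w⟩ ⟨j, w'⟩ = 0 := Matrix.blockDiagonal'_apply_ne _ _ _ hij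
      simp [svc_adj_ww_ne _ _ hij, Matrix.fromBlocks_apply₂₂, Matrix.smul_apply, h0]

end SVCStruct

noncomputable section SVCKey
open Finset

lemma zsum_ne (c d : ℝ) : yKK + rphi c * rphi d ≠ 0 := by
  rw [← _root_.map_mul]
  exact yKK_add_ne _

lemma map_smul_rphi {m l : Type*} (x : ℝ) (M : Matrix m l ℝ) :
    (x • M).map rphi = rphi x • M.map rphi := by
  ext i j
  simp [Matrix.map_apply, Matrix.smul_apply, smul_eq_mul, _root_.map_mul]

lemma map_one_rphi {ι : Type*} [Fintype ι] [DecidableEq ι] :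
    (1 : Matrix ι ι ℝ).map rphi = 1 :=
  Matrix.map_one _ (map_zero _) (map_one _)

lemma fromColumns_map {m n₁ n₂ : Type*} (A : Matrix m n₁ ℝ) (B : Matrix m n₂ ℝ) :
    (Matrix.fromCols A B).map rphi
      = Matrix.fromCols (A.map rphi) (B.map rphi) := by
  ext i (j | j) <;> rfl

lemma fromRows_map {m₁ m₂ l : Type*} (A : Matrix m₁ l ℝ) (B : Matrix m₂ l ℝ) :
    (Matrix.fromRows A B).map rphi
      = Matrix.fromRows (A.map rphi) (B.map rphi) := by
  ext (i | i) j <;> rfl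

/-- determinant of a block-diagonal matrix over a constant family of index types -/
lemma det_bd' {ι κ : Type*} [Fintype ι] [DecidableEq ι] [Fintype κ] [DecidableEq κ]
    (M : ι → Matrix κ κ KK) :
    (Matrix.blockDiagonal' M).det = ∏ i, (M i).det := by
  let e : κ × ι ≃ (Σ _ : ι, κ) :=
    ⟨fun p => ⟨p.2, p.1⟩, fun s => (s.2, s.1), fun _ => rfl, fun _ => rfl⟩
  rw [← Matrix.det_submatrix_equiv_self e]
  have hsub : (Matrix.blockDiagonal' M).submatrix e e = Matrix.blockDiagonal M := by
    ext ⟨i, k⟩ ⟨j, k'⟩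
    rfl
  rw [hsub, Matrix.det_blockDiagonal]

lemma sub_map_one_sub {ι : Type*} [Fintype ι] [DecidableEq ι] (M : Matrix ι ι ℝ) :
    pphi X • (1 : Matrix ι ι KK) - ((1 : Matrix ι ι ℝ) - M).map rphi
      = yKK • 1 + M.map rphi := by
  ext i j
  by_cases h : i = j <;>
    simp [h, Matrix.map_apply, Matrix.sub_apply, Matrix.smul_apply, Matrix.add_apply,
      Matrix.one_apply, map_sub, yKK] <;> ring

lemma smul_one_add_fromBlocks {α β : Type*} [DecidableEq α] [DecidableEq β]
    (s : KK) (A : Matrix α α KK) (B : Matrix α β KK) (C : Matrix β α KK) (D : Matrix β β KK) :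
    s • (1 : Matrix (α ⊕ β) (α ⊕ β) KK) + Matrix.fromBlocks A B C D
      = Matrix.fromBlocks (s • 1 + A) B C (s • 1 + D) := by
  rw [← Matrix.fromBlocks_one, Matrix.fromBlocks_smul, Matrix.fromBlocks_add]
  simp

lemma factor_eq {t r1 : ℕ} (Hi : SimpleGraph (Fin t)) :
    yKK • (1 : Matrix (Fin t) (Fin t) KK) + rphi (cRc r1) • (adjM Hi).map rphi
      = pphi X • 1 - ((1 : Matrix (Fin t) (Fin t) ℝ) - cRc r1 • adjM Hi).map rphi := by
  ext i j
  by_cases h : i = j <;>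
    simp [h, Matrix.map_apply, Matrix.sub_apply, Matrix.smul_apply, Matrix.add_apply,
      Matrix.one_apply, map_sub, yKK, smul_eq_mul, _root_.map_mul] <;> ring

lemma factor_ne {t r1 : ℕ} (Hi : SimpleGraph (Fin t)) :
    (yKK • (1 : Matrix (Fin t) (Fin t) KK) + rphi (cRc r1) • (adjM Hi).map rphi).det ≠ 0 := by
  rw [factor_eq, ← det_pphi_charpoly]
  intro h
  exact (Matrix.charpoly_monic _).ne_zero (pphi_inj (by rwa [map_zero]))

variable {n r t r1 : ℕ}

set_option maxHeartbeats 1000000 in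
lemma svc_charpoly_key (G : SimpleGraph (Fin n)) [DecidableRel G.Adj]
    (hreg : ∀ v, cdeg G v = r) (H : Fin n → SimpleGraph (Fin t))
    (hH : ∀ i w, cdeg (H i) w = r1) :
    pphi (normLap (svc G (fun _ => t) H)).charpoly
      = yKK ^ (Fintype.card G.edgeSet)
        * (∏ i, (yKK • (1 : Matrix (Fin t) (Fin t) KK)
            + rphi (cRc r1) • (adjM (H i)).map rphi).det)
        * (yKK • (1 : Matrix (Fin n) (Fin n) KK)
            - (rphi (aRc r t) ^ 2 * yKK⁻¹) • ((adjM G).map rphi + rphi ((r:ℕ):ℝ) • 1)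
            - (rphi (bRc r t r1) ^ 2 * rphi ((t:ℕ):ℝ)
                * (yKK + rphi (cRc r1) * rphi ((r1:ℕ):ℝ))⁻¹) • 1).det := by
  classical
  have hyne : yKK ≠ 0 := yKK_ne
  have hzne : yKK + rphi (cRc r1) * rphi ((r1:ℕ):ℝ) ≠ 0 := zsum_ne _ _
  -- step 1: charpoly as determinant over KK
  rw [det_pphi_charpoly]
  rw [svc_normLap G H hreg hH, sub_map_one_sub]
  -- step 2: push map into blocks
  rw [Matrix.fromBlocks_map, fromColumns_map, _root_.fromRows_map, Matrix.fromBlocks_map]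
  simp only [Matrix.map_zero _ (map_zero rphi), map_smul_rphi]
  -- step 3: reorganize into 2x2 blocks
  rw [smul_one_add_fromBlocks, smul_one_add_fromBlocks]
  simp only [add_zero, zero_add]
  set BK : Matrix (Fin n) G.edgeSet KK := (B0 G).map rphi with hBK
  set CKm : Matrix (Fin n) (Σ _ : Fin n, Fin t) KK := (C0 n t).map rphi with hCK
  set AWK : Matrix (Σ _ : Fin n, Fin t) (Σ _ : Fin n, Fin t) KK := (AW H).map rphi with hAWK
  set DK : Matrix (G.edgeSet ⊕ Σ _ : Fin n, Fin t) (G.edgeSet ⊕ Σ _ : Fin n, Fin t) KK :=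
    Matrix.fromBlocks (yKK • 1) 0 0 (yKK • 1 + rphi (cRc r1) • AWK) with hDK
  -- determinant of the D block
  have hAWbd : yKK • (1 : Matrix (Σ _ : Fin n, Fin t) (Σ _ : Fin n, Fin t) KK)
      + rphi (cRc r1) • AWK
      = Matrix.blockDiagonal' (fun i => yKK • (1 : Matrix (Fin t) (Fin t) KK)
          + rphi (cRc r1) • (adjM (H i)).map rphi) := by
    rw [hAWK]
    unfold AW
    rw [Matrix.blockDiagonal'_map _ _ (map_zero rphi)]
    rw [← Matrix.blockDiagonal'_one (α := KK) (m' := fun _ : Fin n => Fin t)]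
    rw [← Matrix.blockDiagonal'_smul, ← Matrix.blockDiagonal'_smul, ← Matrix.blockDiagonal'_add]
    rfl
  have hdetD : DK.det = yKK ^ (Fintype.card G.edgeSet)
      * ∏ i, (yKK • (1 : Matrix (Fin t) (Fin t) KK)
          + rphi (cRc r1) • (adjM (H i)).map rphi).det := by
    rw [hDK, Matrix.det_fromBlocks_zero₂₁, Matrix.det_smul, Matrix.det_one, mul_one,
      hAWbd, det_bd']
  have hdetDne : DK.det ≠ 0 := by
    rw [hdetD]
    exact mul_ne_zero (pow_ne_zero _ hyne)
      (Finset.prod_ne_zero_iff.2 fun i _ => factor_ne (H i))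
  haveI : Invertible DK := Matrix.invertibleOfIsUnitDet DK (isUnit_iff_ne_zero.2 hdetDne)
  -- Schur complement
  rw [Matrix.det_fromBlocks₂₂, hdetD]
  rw [mul_comm (yKK ^ Fintype.card G.edgeSet * _)]
  rw [mul_comm (yKK ^ Fintype.card G.edgeSet * _)]
  congr 1
  -- compute B ⅟D C
  set s1 : KK := rphi (aRc r t) * yKK⁻¹ with hs1
  set s2 : KK := rphi (bRc r t r1) * (yKK + rphi (cRc r1) * rphi ((r1:ℕ):ℝ))⁻¹ with hs2
  set RK : Matrix (G.edgeSet ⊕ Σ _ : Fin n, Fin t) (Fin n) KK :=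
    Matrix.fromRows (s1 • BKᵀ) (s2 • CKmᵀ) with hRK
  have hmapT1 : ((B0 G)ᵀ).map rphi = BKᵀ := by rw [hBK, Matrix.transpose_map]
  have hmapT2 : ((C0 n t)ᵀ).map rphi = CKmᵀ := by rw [hCK, Matrix.transpose_map]
  have hACK : AWK * CKmᵀ = rphi ((r1:ℕ):ℝ) • CKmᵀ := by
    rw [hAWK, hCK, ← Matrix.transpose_map, ← Matrix.map_mul, hAC H hH, map_smul_rphi,
      Matrix.transpose_map]
  have htop : (yKK • (1 : Matrix G.edgeSet G.edgeSet KK)) * (s1 • BKᵀ)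
      + (0 : Matrix G.edgeSet (Σ _ : Fin n, Fin t) KK) * (s2 • CKmᵀ)
      = rphi (aRc r t) • BKᵀ := by
    rw [Matrix.zero_mul, add_zero, Matrix.smul_mul, Matrix.one_mul, smul_smul, hs1,
      ← mul_assoc, mul_comm yKK (rphi (aRc r t)), mul_assoc, mul_inv_cancel₀ hyne, mul_one]
  have hbot : (0 : Matrix (Σ _ : Fin n, Fin t) G.edgeSet KK) * (s1 • BKᵀ)
      + (yKK • 1 + rphi (cRc r1) • AWK) * (s2 • CKmᵀ)
      = rphi (bRc r t r1) • CKmᵀ := by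
    rw [Matrix.zero_mul, zero_add, Matrix.add_mul, Matrix.smul_mul, Matrix.one_mul,
      Matrix.smul_mul, Matrix.mul_smul, hACK]
    rw [smul_smul, smul_smul, smul_smul, ← add_smul]
    congr 1
    rw [hs2]
    have hcast : (rphi ((r1:ℕ):ℝ)) = ((r1:ℕ):KK) := map_natCast rphi r1
    field_simp
  have hDR : DK * RK = Matrix.fromRows (rphi (aRc r t) • BKᵀ) (rphi (bRc r t r1) • CKmᵀ) := by
    rw [hDK, hRK, Matrix.fromBlocks_mul_fromRows, htop, hbot]
  have hinvDC : ⅟DK * Matrix.fromRows (rphi (aRc r t) • BKᵀ) (rphi (bRc r t r1) • CKmᵀ)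
      = RK := by
    rw [← hDR, ← Matrix.mul_assoc, invOf_mul_self, Matrix.one_mul]
  rw [hmapT1, hmapT2]
  rw [Matrix.mul_assoc _ (⅟DK) _, hinvDC]
  -- B * R
  rw [hRK, Matrix.fromCols_mul_fromRows]
  have hBBK : BK * BKᵀ = (adjM G).map rphi + rphi ((r:ℕ):ℝ) • 1 := by
    rw [hBK, ← Matrix.transpose_map, ← Matrix.map_mul, hBB G hreg]
    ext i j
    by_cases h : i = j <;>
      simp [h, Matrix.map_apply, Matrix.add_apply, Matrix.smul_apply, Matrix.one_apply,
        smul_eq_mul, _root_.map_add, _root_.map_mul]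
  have hCCK : CKm * CKmᵀ = rphi ((t:ℕ):ℝ) • 1 := by
    rw [hCK, ← Matrix.transpose_map, ← Matrix.map_mul, hCC, map_smul_rphi, map_one_rphi]
  rw [Matrix.mul_smul, Matrix.mul_smul, Matrix.smul_mul, Matrix.smul_mul, hBBK, hCCK]
  rw [smul_smul, smul_smul, smul_smul]
  rw [sub_sub]
  rw [show s1 * rphi (aRc r t) = rphi (aRc r t) ^ 2 * yKK⁻¹ by rw [hs1]; ring]
  rw [show s2 * rphi (bRc r t r1) * rphi ((t:ℕ):ℝ)
      = rphi (bRc r t r1) ^ 2 * rphi ((t:ℕ):ℝ) * (yKK + rphi (cRc r1) * rphi ((r1:ℕ):ℝ))⁻¹ by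
    rw [hs2]; ring]

end SVCKey

noncomputable section SVCFinal
open Finset

variable {n r t r1 : ℕ}

lemma adjM_zero_of_deg_zero {V : Type*} [Fintype V] [DecidableEq V] (P : SimpleGraph V)
    (h : ∀ w, cdeg P w = 0) : adjM P = 0 := by
  classical
  letI : DecidableRel P.Adj := Classical.decRel _
  ext w w'
  rw [adjM_apply]
  simp only [Matrix.zero_apply, ite_eq_right_iff]
  intro hadj
  exfalso
  have hmem : w' ∈ P.neighborFinset w := by
    rw [SimpleGraph.mem_neighborFinset]
    exact hadj
  have : P.degree w = 0 := by rw [← cdeg_eq, h]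
  rw [SimpleGraph.degree] at this
  rw [Finset.card_eq_zero] at this
  rw [this] at hmem
  exact absurd hmem (Finset.notMem_empty w')

lemma factor_det_eq (P Q : SimpleGraph (Fin t)) (hp : ∀ w, cdeg P w = r1)
    (hq : ∀ w, cdeg Q w = r1) (hpq : (normLap P).charpoly = (normLap Q).charpoly) :
    (yKK • (1 : Matrix (Fin t) (Fin t) KK) + rphi (cRc r1) • (adjM P).map rphi).det
      = (yKK • (1 : Matrix (Fin t) (Fin t) KK) + rphi (cRc r1) • (adjM Q).map rphi).det := by
  rcases Nat.eq_zero_or_pos r1 with h0 | hpos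
  · subst h0
    rw [adjM_zero_of_deg_zero P hp, adjM_zero_of_deg_zero Q hq]
  · have hconv : ∀ S : SimpleGraph (Fin t), (∀ w, cdeg S w = r1) →
        yKK • (1 : Matrix (Fin t) (Fin t) KK) + rphi (cRc r1) • (adjM S).map rphi
          = (yKK + rphi (cRc r1) * rphi ((r1:ℕ):ℝ)) • 1
            + (-(rphi (cRc r1) * rphi ((r1:ℕ):ℝ))) • (normLap S).map rphi := by
      intro S hS
      classical
      letI : DecidableRel S.Adj := Classical.decRel _
      rw [regular_adjM S hpos hS]
      ext i j
      by_cases h : i = j <;>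
        simp [h, Matrix.map_apply, Matrix.sub_apply, Matrix.smul_apply, Matrix.add_apply,
          Matrix.one_apply, map_sub, smul_eq_mul, _root_.map_mul] <;> ring
    rw [hconv P hp, hconv Q hq]
    exact det_aff hpq _ _

lemma schur_conv (G : SimpleGraph (Fin n)) [DecidableRel G.Adj] (hr : 0 < r)
    (hreg : ∀ v, cdeg G v = r) :
    yKK • (1 : Matrix (Fin n) (Fin n) KK)
        - (rphi (aRc r t) ^ 2 * yKK⁻¹) • ((adjM G).map rphi + rphi ((r:ℕ):ℝ) • 1)
        - (rphi (bRc r t r1) ^ 2 * rphi ((t:ℕ):ℝ)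
            * (yKK + rphi (cRc r1) * rphi ((r1:ℕ):ℝ))⁻¹) • 1
      = (yKK - 2 * rphi (aRc r t) ^ 2 * yKK⁻¹ * rphi ((r:ℕ):ℝ)
            - rphi (bRc r t r1) ^ 2 * rphi ((t:ℕ):ℝ)
              * (yKK + rphi (cRc r1) * rphi ((r1:ℕ):ℝ))⁻¹) • 1
          + (rphi (aRc r t) ^ 2 * yKK⁻¹ * rphi ((r:ℕ):ℝ)) • (normLap G).map rphi := by
  rw [regular_adjM G hr hreg]
  ext i j
  by_cases h : i = j <;>
    simp [h, Matrix.map_apply, Matrix.sub_apply, Matrix.smul_apply, Matrix.add_apply,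
      Matrix.one_apply, map_sub, smul_eq_mul, _root_.map_mul] <;> ring

lemma twice_card_edges (G : SimpleGraph (Fin n)) [DecidableRel G.Adj]
    (hreg : ∀ v, cdeg G v = r) :
    2 * Fintype.card G.edgeSet = n * r := by
  have h1 := G.sum_degrees_eq_twice_card_edges
  have h2 : ∑ v, G.degree v = n * r := by
    have hall : ∀ v : Fin n, G.degree v = r := fun v => by rw [← cdeg_eq, hreg]
    rw [Finset.sum_congr rfl fun v _ => hall v]
    simp [Finset.sum_const, Finset.card_univ, mul_comm]
  have h3 : Fintype.card G.edgeSet = G.edgeFinset.card := by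
    rw [SimpleGraph.edgeFinset, Set.toFinset_card]
  rw [h3, ← h1, h2]

lemma card_edges_eq (G₁ G₂ : SimpleGraph (Fin n)) [DecidableRel G₁.Adj] [DecidableRel G₂.Adj]
    (hreg₁ : ∀ v, cdeg G₁ v = r) (hreg₂ : ∀ v, cdeg G₂ v = r) :
    Fintype.card G₁.edgeSet = Fintype.card G₂.edgeSet := by
  have e1 := twice_card_edges G₁ hreg₁
  have e2 := twice_card_edges G₂ hreg₂
  omega

end SVCFinal

theorem stmt12 {n r t r1 : ℕ} (hr : 2 ≤ r) (ht : 1 ≤ t)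
    (G₁ G₂ : SimpleGraph (Fin n)) [DecidableRel G₁.Adj] [DecidableRel G₂.Adj]
    (hconn₁ : G₁.Connected) (hconn₂ : G₂.Connected)
    (hreg₁ : ∀ v, cdeg G₁ v = r) (hreg₂ : ∀ v, cdeg G₂ v = r)
    (hG : (normLap G₁).charpoly = (normLap G₂).charpoly)
    (H H' : Fin n → SimpleGraph (Fin t))
    (hH : ∀ i w, cdeg (H i) w = r1) (hH' : ∀ i w, cdeg (H' i) w = r1)
    (hcosp : ∀ i, (normLap (H i)).charpoly = (normLap (H' i)).charpoly) :
    (normLap (svc G₁ (fun _ => t) H)).charpoly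
      = (normLap (svc G₂ (fun _ => t) H')).charpoly := by
  have hr0 : 0 < r := by omega
  apply pphi_inj
  rw [svc_charpoly_key G₁ hreg₁ H hH, svc_charpoly_key G₂ hreg₂ H' hH']
  rw [card_edges_eq G₁ G₂ hreg₁ hreg₂]
  congr 1
  · congr 1
    exact Finset.prod_congr rfl fun i _ =>
      factor_det_eq (H i) (H' i) (hH i) (hH' i) (hcosp i)
  · rw [schur_conv G₁ hr0 hreg₁, schur_conv G₂ hr0 hreg₂]
    exact det_aff hG _ _
end
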